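/- arXiv:1812.04489 — 4 statements merged into one kernel-verified Lean document; each statement's English description precedes it below -/
import Mathlib

section
/- (Schmidt, 1972) There exists an absolute constant C > 0 such that for every m ≥ 2 and every point set ξ = {ξ^1,…,ξ^m} ⊂ [0,1)^2 one has D_∞(ξ) ≥ C·m^{−1}·log m. -/
/-- The discrepancy function of a point set `ξ = (ξ^1,…,ξ^m) ⊂ [0,1)^d` at `b ∈ [0,1)^d`:
`disc(ξ,b) = ∏_j b_j − (1/m)·#{μ : ξ^μ_j < b_j for all j}`. -/
noncomputable def disc (d m : ℕ) (ξ : Fin m → Fin d → ℝ) (b : Fin d → ℝ) : ℝ :=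
  (∏ j, b j) - (1 / (m : ℝ)) *
    ((Finset.univ.filter (fun μ : Fin m => ∀ j, ξ μ j < b j)).card : ℝ)

/-- The `L_q`-discrepancy `D_q(ξ) = (∫_{[0,1)^d} |disc(ξ,b)|^q db)^{1/q}` for `1 ≤ q < ∞`. -/
noncomputable def Dq (d m : ℕ) (ξ : Fin m → Fin d → ℝ) (q : ℝ) : ℝ :=
  (∫ b in Set.univ.pi (fun _ : Fin d => Set.Ico (0 : ℝ) 1),
    |disc d m ξ b| ^ q) ^ (1 / q)

/-- The `L_∞` (star) discrepancy `D_∞(ξ) = sup_{b ∈ [0,1)^d} |disc(ξ,b)|`. -/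
noncomputable def Dinf (d m : ℕ) (ξ : Fin m → Fin d → ℝ) : ℝ :=
  ⨆ b : ↥(Set.univ.pi fun _ : Fin d => Set.Ico (0 : ℝ) 1), |disc d m ξ (b : Fin d → ℝ)|

namespace Schmidt
open Finset

noncomputable section
open scoped Classical


/-- grid point coordinate: midpoint grid at level n+1 -/
def gp (n i : ℕ) : ℝ := (2*i+1)/2^(n+2)

/-- sign `(-1)^(i / 2^p)` -/
def sg (p i : ℕ) : ℝ := (-1)^(i/2^p)

/-- level-k dyadic box containing grid pair (i,j) contains a point of ξ -/
def hit (m : ℕ) (ξ : Fin m → Fin 2 → ℝ) (n k i j : ℕ) : Prop :=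
  ∃ μ, ((i/2^(n+1-k) : ℕ) : ℝ)/2^k ≤ ξ μ 0 ∧ ξ μ 0 < (((i/2^(n+1-k) : ℕ) : ℝ) + 1)/2^k ∧
       ((j/2^(k+1) : ℕ) : ℝ)/2^(n-k) ≤ ξ μ 1 ∧ ξ μ 1 < (((j/2^(k+1) : ℕ) : ℝ) + 1)/2^(n-k)

def f (m : ℕ) (ξ : Fin m → Fin 2 → ℝ) (n k i j : ℕ) : ℝ :=
  if hit m ξ n k i j then 0 else sg (n-k) i * sg k j

lemma abs_f_le_one (m ξ n k i j) : |f m ξ n k i j| ≤ 1 := by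
  unfold f sg
  split
  · simp
  · rw [abs_mul, abs_pow, abs_pow]
    simp

lemma div_fine (A q q' r : ℕ) (h : q' ≤ q) : (A*2^q + r)/2^q' = A*2^(q-q') + r/2^q' := by
  have : A*2^q = (A*2^(q-q'))*2^q' := by
    rw [mul_assoc, ← pow_add]
    congr 2
    omega
  rw [this, add_comm, Nat.add_mul_div_right _ _ (Nat.two_pow_pos q'), add_comm]

lemma div_coarse (A q q' r : ℕ) (h : q ≤ q') (hr : r < 2^q) : (A*2^q + r)/2^q' = A/2^(q'-q) := by
  have h2 : (2:ℕ)^q' = 2^q * 2^(q'-q) := by rw [← pow_add]; congr 1; omega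
  rw [h2, ← Nat.div_div_eq_div_mul, mul_comm, Nat.mul_add_div (Nat.two_pow_pos q),
    Nat.div_eq_of_lt hr, add_zero]

lemma sum_block (M K : ℕ) (g : ℕ → ℝ) :
    ∑ i ∈ range (M*K), g i = ∑ A ∈ range M, ∑ r ∈ range K, g (A*K+r) := by
  induction M with
  | zero => simp
  | succ M ih =>
      rw [Nat.succ_mul, Finset.sum_range_add, ih, Finset.sum_range_succ]

lemma oneD_const (p : ℕ) : ∑ r ∈ range (2^(p+1)), sg p r = 0 := by
  have h : (2:ℕ)^(p+1) = 2*2^p := by ring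
  rw [h, sum_block 2 (2^p)]
  have : ∀ A ∈ range 2, ∑ r ∈ range (2^p), sg p (A*2^p+r) = (-1)^A * 2^p := by
    intro A _
    have : ∀ r ∈ range (2^p), sg p (A*2^p+r) = (-1)^A := by
      intro r hr
      simp only [mem_range] at hr
      unfold sg
      rw [add_comm, Nat.add_mul_div_right _ _ (Nat.two_pow_pos p),
        Nat.div_eq_of_lt hr, zero_add]
    rw [Finset.sum_congr rfl this]
    simp [mul_comm]
  rw [Finset.sum_congr rfl this]
  simp [Finset.sum_range_succ]

lemma gp_shift (n i d : ℕ) : gp n (i + d) = gp n i + 2*d/2^(n+2) := by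
  unfold gp
  push_cast
  ring

lemma oneD_lin (p n A : ℕ) :
    ∑ r ∈ range (2^(p+1)), sg p r * gp n (A*2^(p+1)+r) = -(2^(2*p))/2^(n+1) := by
  have h : (2:ℕ)^(p+1) = 2*2^p := by ring
  rw [h, sum_block 2 (2^p)]
  have e0 : ∀ B ∈ range 2, ∑ r ∈ range (2^p), sg p (B*2^p+r) * gp n (A*(2*2^p)+(B*2^p+r))
      = (-1)^B * ∑ r ∈ range (2^p), gp n (A*(2*2^p)+(B*2^p+r)) := by
    intro B _
    rw [Finset.mul_sum]
    refine Finset.sum_congr rfl fun r hr => ?_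
    simp only [mem_range] at hr
    unfold sg
    rw [add_comm (B*2^p) r, Nat.add_mul_div_right _ _ (Nat.two_pow_pos p),
      Nat.div_eq_of_lt hr, zero_add]
  rw [Finset.sum_congr rfl e0]
  rw [Finset.sum_range_succ, Finset.sum_range_succ]
  simp only [Finset.sum_range_zero, pow_zero, pow_one, one_mul, zero_add, zero_mul, add_zero]
  have key : ∀ r ∈ range (2^p), gp n (A*(2*2^p)+(2^p+r)) = gp n (A*(2*2^p)+r) + (2:ℝ)^(p+1)/2^(n+2) := by
    intro r _
    unfold gp
    push_cast
    ring
  rw [Finset.sum_congr rfl key, Finset.sum_add_distrib]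
  simp only [Finset.sum_const, Finset.card_range, nsmul_eq_mul]
  have hpos : (0:ℝ) < 2^(n+2) := by positivity
  have hpos2 : (0:ℝ) < 2^(n+1) := by positivity
  field_simp
  push_cast
  ring

lemma oneD_ind (p n A : ℕ) (t : ℝ) :
    (∑ r ∈ range (2^(p+1)), sg p r * (if t < gp n (A*2^(p+1)+r) then (1:ℝ) else 0)) = 0 ∨
    ((A*2^(p+1) : ℕ):ℝ)/2^(n+1) ≤ t ∧ t < (((A+1)*2^(p+1) : ℕ):ℝ)/2^(n+1) := by
  by_cases h1 : ∀ r ∈ range (2^(p+1)), t < gp n (A*2^(p+1)+r)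
  · left
    rw [← oneD_const p]
    refine Finset.sum_congr rfl fun r hr => ?_
    rw [if_pos (h1 r hr), mul_one]
  by_cases h2 : ∀ r ∈ range (2^(p+1)), ¬ t < gp n (A*2^(p+1)+r)
  · left
    apply Finset.sum_eq_zero
    intro r hr
    rw [if_neg (h2 r hr), mul_zero]
  right
  push_neg at h1 h2
  obtain ⟨r1, hr1, hge⟩ := h1
  obtain ⟨r2, hr2, hlt⟩ := h2
  simp only [mem_range] at hr1 hr2
  constructor
  · -- block left ≤ gp(A*2^(p+1)+r1) ≤ t
    refine le_trans ?_ hge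
    unfold gp
    rw [div_le_div_iff₀ (by positivity) (by positivity)]
    have : ((2:ℝ)^(n+2)) = 2^(n+1)*2 := by ring
    rw [this]
    push_cast
    nlinarith [pow_pos (show (0:ℝ) < 2 by norm_num) (n+1), Nat.cast_nonneg (α := ℝ) r1]
  · refine lt_of_lt_of_le hlt ?_
    unfold gp
    rw [div_le_div_iff₀ (by positivity) (by positivity)]
    have h3 : (r2:ℝ) ≤ 2^(p+1) - 1 := by
      have : (r2:ℝ) + 1 ≤ ((2:ℕ)^(p+1) : ℝ) := by exact_mod_cast hr2
      push_cast at this ⊢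
      linarith
    have : ((2:ℝ)^(n+2)) = 2^(n+1)*2 := by ring
    rw [this]
    push_cast
    nlinarith [pow_pos (show (0:ℝ) < 2 by norm_num) (n+1)]



variable {m : ℕ} {ξ : Fin m → Fin 2 → ℝ} {n : ℕ}

def Phi (m : ℕ) (ξ : Fin m → Fin 2 → ℝ) (n a b i j : ℕ) : ℝ :=
  f m ξ n a i j * f m ξ n b i j * ∏ k ∈ Finset.Ioo a b, (1 + 4⁻¹ * f m ξ n k i j)

lemma hit_congr {k i1 j1 i2 j2 : ℕ} (h1 : i1/2^(n+1-k) = i2/2^(n+1-k))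
    (h2 : j1/2^(k+1) = j2/2^(k+1)) : hit m ξ n k i1 j1 ↔ hit m ξ n k i2 j2 := by
  unfold hit; rw [h1, h2]

lemma sg_congr {p i1 i2 : ℕ} (h : i1/2^p = i2/2^p) : sg p i1 = sg p i2 := by
  unfold sg; rw [h]

lemma neg_one_pow_double (A : ℕ) : ((-1:ℝ))^(A*2) = 1 := by
  rw [mul_comm, pow_mul]; norm_num

lemma sg_double (A x : ℕ) : ((-1:ℝ))^(A*2 + x) = (-1)^x := by
  rw [pow_add, neg_one_pow_double, one_mul]

lemma base_div_coarse (A q q' : ℕ) (h : q ≤ q') : (A*2^q)/2^q' = A/2^(q'-q) := by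
  have := div_coarse A q q' 0 h (by positivity)
  simpa using this

lemma base_div_fine (A q q' : ℕ) (h : q' ≤ q) : (A*2^q)/2^q' = A*2^(q-q') := by
  have := div_fine A q q' 0 h
  simpa using this

-- x-side divs, i = A*2^(n+1-b)+r, r < 2^(n+1-b)
lemma xdiv_hit {k b A r : ℕ} (hk : k ≤ b) (hr : r < 2^(n+1-b)) :
    (A*2^(n+1-b)+r)/2^(n+1-k) = (A*2^(n+1-b))/2^(n+1-k) := by
  rw [div_coarse A _ _ r (by omega) hr, base_div_coarse A _ _ (by omega)]

lemma xdiv_sg {k b A r : ℕ} (hk : k < b) (hb : b ≤ n) (hr : r < 2^(n+1-b)) :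
    (A*2^(n+1-b)+r)/2^(n-k) = (A*2^(n+1-b))/2^(n-k) := by
  rw [div_coarse A _ _ r (by omega) hr, base_div_coarse A _ _ (by omega)]

lemma xdiv_pat {b A r : ℕ} (hb : b ≤ n) :
    (A*2^(n+1-b)+r)/2^(n-b) = A*2 + r/2^(n-b) := by
  have := div_fine A (n+1-b) (n-b) r (by omega)
  rwa [show (n+1-b)-(n-b) = 1 by omega, pow_one] at this

lemma xbase_pat {b A : ℕ} (hb : b ≤ n) : (A*2^(n+1-b))/2^(n-b) = A*2 := by
  rw [base_div_fine A _ _ (by omega), show (n+1-b)-(n-b) = 1 by omega, pow_one]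

-- y-side divs, j = B*2^(a+1)+s, s < 2^(a+1)
lemma ydiv_hit {a k B s : ℕ}  (hk : a ≤ k) (hs : s < 2^(a+1)) :
    (B*2^(a+1)+s)/2^(k+1) = (B*2^(a+1))/2^(k+1) := by
  rw [div_coarse B _ _ s (by omega) hs, base_div_coarse B _ _ (by omega)]

lemma ydiv_sg {a k B s : ℕ} (hk : a < k) (hs : s < 2^(a+1)) :
    (B*2^(a+1)+s)/2^k = (B*2^(a+1))/2^k := by
  rw [div_coarse B _ _ s (by omega) hs, base_div_coarse B _ _ (by omega)]

lemma ydiv_pat {a B s : ℕ} : (B*2^(a+1)+s)/2^a = B*2 + s/2^a := by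
  have := div_fine B (a+1) a s (by omega)
  rwa [show (a+1)-a = 1 by omega, pow_one] at this

lemma ybase_pat {a B : ℕ} : (B*2^(a+1))/2^a = B*2 := by
  rw [base_div_fine B _ _ (by omega), show (a+1)-a = 1 by omega, pow_one]

lemma sg_x_split {b A r : ℕ} (hb : b ≤ n) :
    sg (n-b) (A*2^(n+1-b)+r) = sg (n-b) (A*2^(n+1-b)) * sg (n-b) r := by
  unfold sg
  rw [xdiv_pat hb, xbase_pat hb, sg_double, neg_one_pow_double, one_mul]

lemma sg_y_split {a B s : ℕ} :
    sg a (B*2^(a+1)+s) = sg a (B*2^(a+1)) * sg a s := by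
  unfold sg
  rw [ydiv_pat, ybase_pat, sg_double, neg_one_pow_double, one_mul]

-- pattern lemmas for pair a < b ≤ n
lemma f_b_pat {a b A B r s : ℕ} (hab : a < b) (hb : b ≤ n) (hr : r < 2^(n+1-b)) (hs : s < 2^(a+1)) :
    f m ξ n b (A*2^(n+1-b)+r) (B*2^(a+1)+s)
      = f m ξ n b (A*2^(n+1-b)) (B*2^(a+1)) * sg (n-b) r := by
  unfold f
  rw [if_congr (hit_congr (xdiv_hit (le_refl b) hr) (ydiv_hit (le_of_lt hab) hs)) rfl rfl]
  split
  · rw [zero_mul]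
  · rw [sg_congr (p := b) (ydiv_sg hab hs), sg_x_split hb]
    ring

lemma f_a_pat {a b A B r s : ℕ} (hab : a < b) (hb : b ≤ n) (hr : r < 2^(n+1-b)) (hs : s < 2^(a+1)) :
    f m ξ n a (A*2^(n+1-b)+r) (B*2^(a+1)+s)
      = f m ξ n a (A*2^(n+1-b)) (B*2^(a+1)) * sg a s := by
  unfold f
  rw [if_congr (hit_congr (xdiv_hit (le_of_lt hab) hr) (ydiv_hit (le_refl a) hs)) rfl rfl]
  split
  · rw [zero_mul]
  · rw [sg_congr (p := n-a) (xdiv_sg hab hb hr), sg_y_split]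
    ring

lemma f_mid_pat {a b k A B r s : ℕ} (ha : a < k) (hk : k < b) (hb : b ≤ n)
    (hr : r < 2^(n+1-b)) (hs : s < 2^(a+1)) :
    f m ξ n k (A*2^(n+1-b)+r) (B*2^(a+1)+s) = f m ξ n k (A*2^(n+1-b)) (B*2^(a+1)) := by
  unfold f
  rw [if_congr (hit_congr (xdiv_hit (le_of_lt hk) hr) (ydiv_hit (le_of_lt ha) hs)) rfl rfl,
    sg_congr (xdiv_sg hk hb hr), sg_congr (ydiv_sg ha hs)]

lemma Phi_pat {a b A B r s : ℕ} (hab : a < b) (hb : b ≤ n) (hr : r < 2^(n+1-b)) (hs : s < 2^(a+1)) :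
    Phi m ξ n a b (A*2^(n+1-b)+r) (B*2^(a+1)+s)
      = Phi m ξ n a b (A*2^(n+1-b)) (B*2^(a+1)) * (sg (n-b) r * sg a s) := by
  unfold Phi
  rw [f_b_pat hab hb hr hs, f_a_pat hab hb hr hs]
  have : ∏ k ∈ Finset.Ioo a b, (1 + 4⁻¹ * f m ξ n k (A*2^(n+1-b)+r) (B*2^(a+1)+s))
      = ∏ k ∈ Finset.Ioo a b, (1 + 4⁻¹ * f m ξ n k (A*2^(n+1-b)) (B*2^(a+1))) := by
    refine Finset.prod_congr rfl fun k hk => ?_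
    rw [Finset.mem_Ioo] at hk
    rw [f_mid_pat hk.1 hk.2 hb hr hs]
  rw [this]; ring

-- single level pattern
lemma f_single_pat {b A B r s : ℕ} (hb : b ≤ n) (hr : r < 2^(n+1-b)) (hs : s < 2^(b+1)) :
    f m ξ n b (A*2^(n+1-b)+r) (B*2^(b+1)+s)
      = f m ξ n b (A*2^(n+1-b)) (B*2^(b+1)) * (sg (n-b) r * sg b s) := by
  unfold f
  rw [if_congr (hit_congr (xdiv_hit (le_refl b) hr) (ydiv_hit (le_refl b) hs)) rfl rfl]
  split
  · rw [zero_mul]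
  · rw [sg_x_split hb, sg_y_split (a := b)]
    ring

lemma f_base_val {b A B : ℕ} (hb : b ≤ n) :
    f m ξ n b (A*2^(n+1-b)) (B*2^(b+1))
      = if hit m ξ n b (A*2^(n+1-b)) (B*2^(b+1)) then 0 else 1 := by
  unfold f
  split
  · rfl
  · unfold sg
    rw [xbase_pat hb, ybase_pat, neg_one_pow_double, neg_one_pow_double, one_mul]


-- ############ piece 3 ############

lemma abs_one_add_f (k i j : ℕ) : |1 + 4⁻¹ * f m ξ n k i j| ≤ 5/4 := by
  have h := abs_f_le_one m ξ n k i j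
  rw [abs_le] at h ⊢
  constructor <;> nlinarith [h.1, h.2]

lemma one_add_f_nonneg (k i j : ℕ) : 0 ≤ 1 + 4⁻¹ * f m ξ n k i j := by
  have h := (abs_le.mp (abs_f_le_one m ξ n k i j)).1
  nlinarith

lemma abs_Phi_le (a b i j : ℕ) : |Phi m ξ n a b i j| ≤ (5/4)^(b-a-1) := by
  unfold Phi
  rw [abs_mul, abs_mul]
  calc |f m ξ n a i j| * |f m ξ n b i j| * |∏ k ∈ Finset.Ioo a b, (1 + 4⁻¹ * f m ξ n k i j)|
      ≤ 1 * 1 * (5/4)^(b-a-1) := by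
        apply mul_le_mul
        · apply mul_le_mul (abs_f_le_one m ξ n a i j) (abs_f_le_one m ξ n b i j)
            (abs_nonneg _) (by norm_num)
        · rw [Finset.abs_prod]
          calc ∏ k ∈ Finset.Ioo a b, |1 + 4⁻¹ * f m ξ n k i j|
              ≤ ∏ k ∈ Finset.Ioo a b, (5/4 : ℝ) := by
                apply Finset.prod_le_prod (fun k _ => abs_nonneg _)
                  (fun k _ => abs_one_add_f k i j)
            _ = (5/4)^(b-a-1) := by rw [Finset.prod_const, Nat.card_Ioo]
        · positivity
        · norm_num
    _ = (5/4)^(b-a-1) := by ring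

lemma sum_mul_split (M1 K1 M2 K2 : ℕ) (φ ψ : ℕ → ℕ → ℝ) (w1 w2 u v : ℕ → ℝ)
    (hφ : ∀ A B r s, r < K1 → s < K2 → φ (A*K1+r) (B*K2+s) = ψ A B * (u r * v s)) :
    ∑ i ∈ range (M1*K1), ∑ j ∈ range (M2*K2), φ i j * (w1 i * w2 j)
      = ∑ A ∈ range M1, ∑ B ∈ range M2,
          ψ A B * ((∑ r ∈ range K1, u r * w1 (A*K1+r)) * (∑ s ∈ range K2, v s * w2 (B*K2+s))) := by
  rw [sum_block M1 K1 (fun i => ∑ j ∈ range (M2*K2), φ i j * (w1 i * w2 j))]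
  refine Finset.sum_congr rfl fun A _ => ?_
  have inner : ∀ r, (∑ j ∈ range (M2*K2), φ (A*K1+r) j * (w1 (A*K1+r) * w2 j))
      = ∑ B ∈ range M2, ∑ s ∈ range K2, φ (A*K1+r) (B*K2+s) * (w1 (A*K1+r) * w2 (B*K2+s)) := by
    intro r
    exact sum_block M2 K2 _
  rw [Finset.sum_congr rfl (fun r _ => inner r), Finset.sum_comm]
  refine Finset.sum_congr rfl fun B _ => ?_
  have : ∀ r ∈ range K1, ∑ s ∈ range K2, φ (A*K1+r) (B*K2+s) * (w1 (A*K1+r) * w2 (B*K2+s))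
      = ∑ s ∈ range K2, ψ A B * ((u r * w1 (A*K1+r)) * (v s * w2 (B*K2+s))) := by
    intro r hr
    refine Finset.sum_congr rfl fun s hs => ?_
    rw [mem_range] at hr hs
    rw [hφ A B r s hr hs]; ring
  rw [Finset.sum_congr rfl this, Finset.sum_mul_sum, Finset.mul_sum]
  refine Finset.sum_congr rfl fun r _ => ?_
  rw [Finset.mul_sum]

lemma grid_split_x {b : ℕ} (hb : b ≤ n) : 2^b * 2^(n+1-b) = 2^(n+1) := by
  rw [← pow_add]; congr 1; omega

lemma grid_split_y {a : ℕ} (ha : a ≤ n) : 2^(n-a) * 2^(a+1) = 2^(n+1) := by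
  rw [← pow_add]; congr 1; omega

lemma real_div_pow (x u v w : ℕ) (h : u + v = w) : ((x*2^u : ℕ):ℝ)/2^w = (x:ℝ)/2^v := by
  have : ((2:ℝ))^w = 2^u * 2^v := by rw [← pow_add, h]
  rw [this]
  push_cast
  rw [div_eq_div_iff (by positivity) (by positivity)]
  ring

-- the "single" integral against gp weights
lemma single_gp {b : ℕ} (hb : b ≤ n) :
    ∑ i ∈ range (2^b * 2^(n+1-b)), ∑ j ∈ range (2^(n-b) * 2^(b+1)),
        f m ξ n b i j * (gp n i * gp n j)
      = (∑ A ∈ range (2^b), ∑ B ∈ range (2^(n-b)),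
          (if hit m ξ n b (A*2^(n+1-b)) (B*2^(b+1)) then (0:ℝ) else 1)) / 4 := by
  rw [sum_mul_split _ _ _ _ _
      (fun A B => if hit m ξ n b (A*2^(n+1-b)) (B*2^(b+1)) then (0:ℝ) else 1)
      (gp n) (gp n) (sg (n-b)) (sg b)
      (fun A B r s hr hs => by
        rw [f_single_pat hb hr hs, f_base_val hb])]
  rw [Finset.sum_div]
  refine Finset.sum_congr rfl fun A _ => ?_
  rw [Finset.sum_div]
  refine Finset.sum_congr rfl fun B _ => ?_
  have hx : ∑ r ∈ range (2^(n+1-b)), sg (n-b) r * gp n (A*2^(n+1-b)+r)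
      = -(2^(2*(n-b)))/2^(n+1) := by
    have h : n+1-b = (n-b)+1 := by omega
    rw [h]
    exact oneD_lin (n-b) n A
  have hy : ∑ s ∈ range (2^(b+1)), sg b s * gp n (B*2^(b+1)+s)
      = -(2^(2*b))/2^(n+1) := oneD_lin b n B
  rw [hx, hy]
  have hpow : ((2:ℝ)^(2*(n-b)) * 2^(2*b)) = 2^(2*n) := by
    rw [← pow_add]; congr 1; omega
  have h1 : (-(2:ℝ)^(2*(n-b))/2^(n+1) * (-(2:ℝ)^(2*b)/2^(n+1))) = 1/4 := by
    rw [div_mul_div_comm, neg_mul_neg, hpow, ← pow_add]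
    rw [show (n+1)+(n+1) = (2*n)+2 by ring, pow_add]
    have : (0:ℝ) < 2^(2*n) := by positivity
    field_simp
    norm_num
  rw [h1]
  ring

lemma hit_base_iff {b A B : ℕ} :
    hit m ξ n b (A*2^(n+1-b)) (B*2^(b+1)) ↔
    ∃ μ, ((A:ℝ)/2^b ≤ ξ μ 0 ∧ ξ μ 0 < ((A:ℝ)+1)/2^b) ∧
         ((B:ℝ)/2^(n-b) ≤ ξ μ 1 ∧ ξ μ 1 < ((B:ℝ)+1)/2^(n-b)) := by
  unfold hit
  rw [Nat.mul_div_cancel A (Nat.two_pow_pos (n+1-b)),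
    Nat.mul_div_cancel B (Nat.two_pow_pos (b+1))]
  constructor
  · rintro ⟨μ, h1, h2, h3, h4⟩; exact ⟨μ, ⟨h1, h2⟩, h3, h4⟩
  · rintro ⟨μ, ⟨h1, h2⟩, h3, h4⟩; exact ⟨μ, h1, h2, h3, h4⟩

lemma ind_interval_le_one (t c : ℝ) (hc : 0 < c) (M : ℕ) :
    ∑ A ∈ range M, (if ((A:ℝ)/c ≤ t ∧ t < ((A:ℝ)+1)/c) then (1:ℝ) else 0) ≤ 1 := by
  by_cases hex : ∃ A0 : ℕ, ((A0:ℝ)/c ≤ t ∧ t < ((A0:ℝ)+1)/c)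
  · obtain ⟨A0, h0⟩ := hex
    have huniq : ∀ A : ℕ, ((A:ℝ)/c ≤ t ∧ t < ((A:ℝ)+1)/c) → A = A0 := by
      intro A hA
      by_contra hne
      rcases Nat.lt_or_ge A A0 with h | h
      · have h5 : ((A:ℝ)+1) ≤ A0 := by exact_mod_cast h
        have h6 : ((A:ℝ)+1)/c ≤ (A0:ℝ)/c := by gcongr
        exact absurd (lt_of_lt_of_le hA.2 (le_trans h6 h0.1)) (lt_irrefl t)
      · have hlt : A0 < A := by omega
        have : ((A0:ℝ)+1) ≤ A := by exact_mod_cast hlt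
        have h5 : t < ((A0:ℝ)+1)/c := h0.2
        have h6 : ((A0:ℝ)+1)/c ≤ (A:ℝ)/c := by gcongr
        exact absurd (lt_of_lt_of_le h5 (le_trans h6 hA.1)) (lt_irrefl t)
    calc ∑ A ∈ range M, (if ((A:ℝ)/c ≤ t ∧ t < ((A:ℝ)+1)/c) then (1:ℝ) else 0)
        ≤ ∑ A ∈ range M, (if A = A0 then (1:ℝ) else 0) := by
          apply Finset.sum_le_sum
          intro A _
          by_cases h : ((A:ℝ)/c ≤ t ∧ t < ((A:ℝ)+1)/c)
          · rw [if_pos h, if_pos (huniq A h)]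
          · rw [if_neg h]
            split <;> norm_num
      _ ≤ 1 := by
          rw [Finset.sum_ite_eq' (range M) A0 (fun _ => (1:ℝ))]
          split <;> norm_num
  · push_neg at hex
    apply le_trans (le_of_eq (Finset.sum_eq_zero fun A _ => ?_)) zero_le_one
    rw [if_neg]
    intro h
    exact absurd h.2 (not_lt.mpr (hex A h.1))

lemma count_hit_le {b : ℕ} :
    ∑ A ∈ range (2^b), ∑ B ∈ range (2^(n-b)),
        (if hit m ξ n b (A*2^(n+1-b)) (B*2^(b+1)) then (1:ℝ) else 0) ≤ m := by
  have step1 : ∀ A B : ℕ, (if hit m ξ n b (A*2^(n+1-b)) (B*2^(b+1)) then (1:ℝ) else 0)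
      ≤ ∑ μ : Fin m, (if (((A:ℝ)/2^b ≤ ξ μ 0 ∧ ξ μ 0 < ((A:ℝ)+1)/2^b) ∧
         ((B:ℝ)/2^(n-b) ≤ ξ μ 1 ∧ ξ μ 1 < ((B:ℝ)+1)/2^(n-b))) then (1:ℝ) else 0) := by
    intro A B
    split
    · rename_i h
      rw [hit_base_iff] at h
      obtain ⟨μ0, hμ0⟩ := h
      calc (1:ℝ) = (if (((A:ℝ)/2^b ≤ ξ μ0 0 ∧ ξ μ0 0 < ((A:ℝ)+1)/2^b) ∧
          ((B:ℝ)/2^(n-b) ≤ ξ μ0 1 ∧ ξ μ0 1 < ((B:ℝ)+1)/2^(n-b))) then (1:ℝ) else 0) := by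
            rw [if_pos hμ0]
        _ ≤ _ := by
            apply Finset.single_le_sum (f := fun μ => (if (((A:ℝ)/2^b ≤ ξ μ 0 ∧ ξ μ 0 < ((A:ℝ)+1)/2^b) ∧
              ((B:ℝ)/2^(n-b) ≤ ξ μ 1 ∧ ξ μ 1 < ((B:ℝ)+1)/2^(n-b))) then (1:ℝ) else 0))
              (fun μ _ => by split <;> norm_num) (Finset.mem_univ μ0)
    · apply Finset.sum_nonneg
      intro μ _
      split <;> norm_num
  calc ∑ A ∈ range (2^b), ∑ B ∈ range (2^(n-b)),
        (if hit m ξ n b (A*2^(n+1-b)) (B*2^(b+1)) then (1:ℝ) else 0)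
      ≤ ∑ A ∈ range (2^b), ∑ B ∈ range (2^(n-b)), ∑ μ : Fin m,
          (if (((A:ℝ)/2^b ≤ ξ μ 0 ∧ ξ μ 0 < ((A:ℝ)+1)/2^b) ∧
            ((B:ℝ)/2^(n-b) ≤ ξ μ 1 ∧ ξ μ 1 < ((B:ℝ)+1)/2^(n-b))) then (1:ℝ) else 0) := by
        exact Finset.sum_le_sum fun A _ => Finset.sum_le_sum fun B _ => step1 A B
    _ = ∑ A ∈ range (2^b), ∑ μ : Fin m, ∑ B ∈ range (2^(n-b)),
          (if (((A:ℝ)/2^b ≤ ξ μ 0 ∧ ξ μ 0 < ((A:ℝ)+1)/2^b) ∧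
            ((B:ℝ)/2^(n-b) ≤ ξ μ 1 ∧ ξ μ 1 < ((B:ℝ)+1)/2^(n-b))) then (1:ℝ) else 0) :=
        Finset.sum_congr rfl fun A _ => Finset.sum_comm
    _ = ∑ μ : Fin m, ∑ A ∈ range (2^b), ∑ B ∈ range (2^(n-b)),
          (if (((A:ℝ)/2^b ≤ ξ μ 0 ∧ ξ μ 0 < ((A:ℝ)+1)/2^b) ∧
            ((B:ℝ)/2^(n-b) ≤ ξ μ 1 ∧ ξ μ 1 < ((B:ℝ)+1)/2^(n-b))) then (1:ℝ) else 0) :=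
        Finset.sum_comm
    _ ≤ ∑ _μ : Fin m, (1:ℝ) := by
        apply Finset.sum_le_sum
        intro μ _
        have hsplit : ∀ A B : ℕ, (if (((A:ℝ)/2^b ≤ ξ μ 0 ∧ ξ μ 0 < ((A:ℝ)+1)/2^b) ∧
            ((B:ℝ)/2^(n-b) ≤ ξ μ 1 ∧ ξ μ 1 < ((B:ℝ)+1)/2^(n-b))) then (1:ℝ) else 0)
            = (if ((A:ℝ)/2^b ≤ ξ μ 0 ∧ ξ μ 0 < ((A:ℝ)+1)/2^b) then (1:ℝ) else 0)
              * (if ((B:ℝ)/2^(n-b) ≤ ξ μ 1 ∧ ξ μ 1 < ((B:ℝ)+1)/2^(n-b)) then (1:ℝ) else 0) := by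
          intro A B
          by_cases h1 : ((A:ℝ)/2^b ≤ ξ μ 0 ∧ ξ μ 0 < ((A:ℝ)+1)/2^b) <;>
            by_cases h2 : ((B:ℝ)/2^(n-b) ≤ ξ μ 1 ∧ ξ μ 1 < ((B:ℝ)+1)/2^(n-b)) <;>
            simp [h1, h2]
        calc ∑ A ∈ range (2^b), ∑ B ∈ range (2^(n-b)), (if (((A:ℝ)/2^b ≤ ξ μ 0 ∧ ξ μ 0 < ((A:ℝ)+1)/2^b) ∧
            ((B:ℝ)/2^(n-b) ≤ ξ μ 1 ∧ ξ μ 1 < ((B:ℝ)+1)/2^(n-b))) then (1:ℝ) else 0)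
            = (∑ A ∈ range (2^b), (if ((A:ℝ)/2^b ≤ ξ μ 0 ∧ ξ μ 0 < ((A:ℝ)+1)/2^b) then (1:ℝ) else 0))
              * (∑ B ∈ range (2^(n-b)), (if ((B:ℝ)/2^(n-b) ≤ ξ μ 1 ∧ ξ μ 1 < ((B:ℝ)+1)/2^(n-b)) then (1:ℝ) else 0)) := by
              rw [Finset.sum_mul_sum]
              exact Finset.sum_congr rfl fun A _ => Finset.sum_congr rfl fun B _ => hsplit A B
          _ ≤ 1 * 1 := by
              apply mul_le_mul (ind_interval_le_one _ _ (by positivity) _)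
                (ind_interval_le_one _ _ (by positivity) _) ?_ (by norm_num)
              apply Finset.sum_nonneg
              intro B _
              split <;> norm_num
          _ = 1 := by norm_num
    _ = m := by simp

lemma empty_count_ge {b : ℕ} (hb : b ≤ n) :
    ((2:ℝ)^n) - m ≤ ∑ A ∈ range (2^b), ∑ B ∈ range (2^(n-b)),
        (if hit m ξ n b (A*2^(n+1-b)) (B*2^(b+1)) then (0:ℝ) else 1) := by
  have key : ∀ A B : ℕ, (if hit m ξ n b (A*2^(n+1-b)) (B*2^(b+1)) then (0:ℝ) else 1)
      = 1 - (if hit m ξ n b (A*2^(n+1-b)) (B*2^(b+1)) then (1:ℝ) else 0) := by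
    intro A B; split <;> norm_num
  calc ((2:ℝ)^n) - m
      ≤ (2:ℝ)^b * 2^(n-b) -
        ∑ A ∈ range (2^b), ∑ B ∈ range (2^(n-b)),
          (if hit m ξ n b (A*2^(n+1-b)) (B*2^(b+1)) then (1:ℝ) else 0) := by
        have h1 : ((2:ℝ))^b * 2^(n-b) = 2^n := by
          rw [← pow_add]; congr 1; omega
        rw [h1]
        have := count_hit_le (m := m) (ξ := ξ) (n := n) (b := b)
        linarith
    _ = ∑ A ∈ range (2^b), ∑ B ∈ range (2^(n-b)),
          (if hit m ξ n b (A*2^(n+1-b)) (B*2^(b+1)) then (0:ℝ) else 1) := by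
        rw [Finset.sum_congr rfl (fun A (_ : A ∈ range (2^b)) => Finset.sum_congr rfl
          (fun B (_ : B ∈ range (2^(n-b))) => key A B))]
        simp only [Finset.sum_sub_distrib, Finset.sum_const, Finset.card_range, nsmul_eq_mul,
          mul_one]
        push_cast
        ring

lemma single_one {b : ℕ} (hb : b ≤ n) :
    ∑ i ∈ range (2^b * 2^(n+1-b)), ∑ j ∈ range (2^(n-b) * 2^(b+1)),
        f m ξ n b i j * ((1:ℝ) * 1) = 0 := by
  rw [sum_mul_split _ _ _ _ _
      (fun A B => if hit m ξ n b (A*2^(n+1-b)) (B*2^(b+1)) then (0:ℝ) else 1)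
      (fun _ => 1) (fun _ => 1) (sg (n-b)) (sg b)
      (fun A B r s hr hs => by rw [f_single_pat hb hr hs, f_base_val hb])]
  apply Finset.sum_eq_zero; intro A _
  apply Finset.sum_eq_zero; intro B _
  have hx : ∑ r ∈ range (2^(n+1-b)), sg (n-b) r * 1 = 0 := by
    rw [show n+1-b = (n-b)+1 by omega]
    simpa using oneD_const (n-b)
  rw [hx]
  ring

lemma single_cnt {b : ℕ} (hb : b ≤ n) (t0 t1 : ℝ)
    (hmem : ∀ A B : ℕ, (((A*2^(n+1-b) : ℕ):ℝ)/2^(n+1) ≤ t0 ∧ t0 < (((A+1)*2^(n+1-b) : ℕ):ℝ)/2^(n+1))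
      → (((B*2^(b+1) : ℕ):ℝ)/2^(n+1) ≤ t1 ∧ t1 < (((B+1)*2^(b+1) : ℕ):ℝ)/2^(n+1))
      → hit m ξ n b (A*2^(n+1-b)) (B*2^(b+1))) :
    ∑ i ∈ range (2^b * 2^(n+1-b)), ∑ j ∈ range (2^(n-b) * 2^(b+1)),
        f m ξ n b i j * ((if t0 < gp n i then (1:ℝ) else 0) * (if t1 < gp n j then (1:ℝ) else 0)) = 0 := by
  rw [sum_mul_split _ _ _ _ _
      (fun A B => if hit m ξ n b (A*2^(n+1-b)) (B*2^(b+1)) then (0:ℝ) else 1)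
      (fun i => if t0 < gp n i then (1:ℝ) else 0) (fun j => if t1 < gp n j then (1:ℝ) else 0)
      (sg (n-b)) (sg b)
      (fun A B r s hr hs => by rw [f_single_pat hb hr hs, f_base_val hb])]
  apply Finset.sum_eq_zero; intro A _
  apply Finset.sum_eq_zero; intro B _
  have hx := oneD_ind (n-b) n A t0
  have hy := oneD_ind b n B t1
  rw [show (n-b)+1 = n+1-b by omega] at hx
  rcases hx with hx0 | hxm
  · rw [hx0]; ring
  rcases hy with hy0 | hym
  · rw [hy0]; ring
  rw [if_pos (hmem A B hxm hym)]
  ring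

-- pair versions
lemma pair_one {a b : ℕ} (hab : a < b) (hb : b ≤ n) :
    ∑ i ∈ range (2^b * 2^(n+1-b)), ∑ j ∈ range (2^(n-a) * 2^(a+1)),
        Phi m ξ n a b i j * ((1:ℝ) * 1) = 0 := by
  rw [sum_mul_split _ _ _ _ _
      (fun A B => Phi m ξ n a b (A*2^(n+1-b)) (B*2^(a+1)))
      (fun _ => 1) (fun _ => 1) (sg (n-b)) (sg a)
      (fun A B r s hr hs => Phi_pat hab hb hr hs)]
  apply Finset.sum_eq_zero; intro A _
  apply Finset.sum_eq_zero; intro B _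
  have hx : ∑ r ∈ range (2^(n+1-b)), sg (n-b) r * 1 = 0 := by
    rw [show n+1-b = (n-b)+1 by omega]
    simpa using oneD_const (n-b)
  rw [hx]
  ring

lemma pair_base_zero {a b A B : ℕ} (hab : a < b) (hb : b ≤ n) (μ : Fin m)
    (hx1 : ((A*2^(n+1-b) : ℕ):ℝ)/2^(n+1) ≤ ξ μ 0) (hx2 : ξ μ 0 < (((A+1)*2^(n+1-b) : ℕ):ℝ)/2^(n+1))
    (hy1 : ((B*2^(a+1) : ℕ):ℝ)/2^(n+1) ≤ ξ μ 1) (hy2 : ξ μ 1 < (((B+1)*2^(a+1) : ℕ):ℝ)/2^(n+1)) :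
    Phi m ξ n a b (A*2^(n+1-b)) (B*2^(a+1)) = 0 := by
  have hfb : f m ξ n b (A*2^(n+1-b)) (B*2^(a+1)) = 0 := by
    unfold f
    rw [if_pos]
    unfold hit
    refine ⟨μ, ?_, ?_, ?_, ?_⟩
    · rw [Nat.mul_div_cancel A (Nat.two_pow_pos (n+1-b))]
      rw [real_div_pow A (n+1-b) b (n+1) (by omega)] at hx1
      exact hx1
    · rw [Nat.mul_div_cancel A (Nat.two_pow_pos (n+1-b))]
      rw [real_div_pow (A+1) (n+1-b) b (n+1) (by omega)] at hx2
      push_cast at hx2 ⊢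
      exact hx2
    · rw [base_div_coarse B (a+1) (b+1) (by omega), show (b+1)-(a+1) = b-a by omega]
      rw [real_div_pow B (a+1) (n-a) (n+1) (by omega)] at hy1
      set D := B/2^(b-a) with hD
      have hnat : D*2^(b-a) ≤ B := Nat.div_mul_le_self B (2^(b-a))
      have hsplit : ((2:ℝ))^(n-a) = 2^(b-a) * 2^(n-b) := by
        rw [← pow_add]; congr 1; omega
      have : ((D:ℝ))/2^(n-b) ≤ (B:ℝ)/2^(n-a) := by
        rw [hsplit, div_le_div_iff₀ (by positivity) (by positivity)]
        have : ((D:ℝ))*2^(b-a) ≤ B := by exact_mod_cast hnat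
        nlinarith [pow_pos (show (0:ℝ) < 2 by norm_num) (n-b)]
      linarith
    · rw [base_div_coarse B (a+1) (b+1) (by omega), show (b+1)-(a+1) = b-a by omega]
      rw [real_div_pow (B+1) (a+1) (n-a) (n+1) (by omega)] at hy2
      set D := B/2^(b-a) with hD
      have hnat : B+1 ≤ (D+1)*2^(b-a) := by
        have h1 : B < B/2^(b-a) * 2^(b-a) + 2^(b-a) := Nat.lt_div_mul_add (by positivity)
        have h2 : (D+1)*2^(b-a) = B/2^(b-a) * 2^(b-a) + 2^(b-a) := by rw [hD]; ring
        omega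
      have hsplit : ((2:ℝ))^(n-a) = 2^(b-a) * 2^(n-b) := by
        rw [← pow_add]; congr 1; omega
      have hcast : ((B:ℝ))+1 ≤ ((D:ℝ)+1)*2^(b-a) := by exact_mod_cast hnat
      have : ((B:ℝ)+1)/2^(n-a) ≤ ((D:ℝ)+1)/2^(n-b) := by
        rw [hsplit, div_le_div_iff₀ (by positivity) (by positivity)]
        nlinarith [pow_pos (show (0:ℝ) < 2 by norm_num) (n-b)]
      push_cast at hy2
      push_cast
      linarith
  unfold Phi
  rw [hfb]
  ring

lemma pair_cnt {a b : ℕ} (hab : a < b) (hb : b ≤ n) (μ : Fin m) :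
    ∑ i ∈ range (2^b * 2^(n+1-b)), ∑ j ∈ range (2^(n-a) * 2^(a+1)),
        Phi m ξ n a b i j * ((if ξ μ 0 < gp n i then (1:ℝ) else 0) * (if ξ μ 1 < gp n j then (1:ℝ) else 0)) = 0 := by
  rw [sum_mul_split _ _ _ _ _
      (fun A B => Phi m ξ n a b (A*2^(n+1-b)) (B*2^(a+1)))
      (fun i => if ξ μ 0 < gp n i then (1:ℝ) else 0) (fun j => if ξ μ 1 < gp n j then (1:ℝ) else 0)
      (sg (n-b)) (sg a)
      (fun A B r s hr hs => Phi_pat hab hb hr hs)]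
  apply Finset.sum_eq_zero; intro A _
  apply Finset.sum_eq_zero; intro B _
  have hx := oneD_ind (n-b) n A (ξ μ 0)
  have hy := oneD_ind a n B (ξ μ 1)
  rw [show (n-b)+1 = n+1-b by omega] at hx
  rcases hx with hx0 | hxm
  · rw [hx0]; ring
  rcases hy with hy0 | hym
  · rw [hy0]; ring
  rw [pair_base_zero hab hb μ hxm.1 hxm.2 hym.1 hym.2]
  ring

lemma pair_gp_bound {a b : ℕ} (hab : a < b) (hb : b ≤ n) :
    |∑ i ∈ range (2^b * 2^(n+1-b)), ∑ j ∈ range (2^(n-a) * 2^(a+1)),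
        Phi m ξ n a b i j * (gp n i * gp n j)| ≤ (5/4)^(b-a-1) * (2^(n-b) * 2^a) / 4 := by
  rw [sum_mul_split _ _ _ _ _
      (fun A B => Phi m ξ n a b (A*2^(n+1-b)) (B*2^(a+1)))
      (gp n) (gp n) (sg (n-b)) (sg a)
      (fun A B r s hr hs => Phi_pat hab hb hr hs)]
  have hx : ∀ A : ℕ, ∑ r ∈ range (2^(n+1-b)), sg (n-b) r * gp n (A*2^(n+1-b)+r)
      = -(2^(2*(n-b)))/2^(n+1) := by
    intro A
    rw [show n+1-b = (n-b)+1 by omega]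
    exact oneD_lin (n-b) n A
  have hy : ∀ B : ℕ, ∑ s ∈ range (2^(a+1)), sg a s * gp n (B*2^(a+1)+s)
      = -(2^(2*a))/2^(n+1) := fun B => oneD_lin a n B
  have hC : (-(2^(2*(n-b)):ℝ)/2^(n+1)) * (-(2^(2*a):ℝ)/2^(n+1)) = 2^(2*(n-b)) * 2^(2*a) / 2^(2*n+2) := by
    have hd : (2:ℝ)^(n+1) * 2^(n+1) = 2^(2*n+2) := by
      rw [← pow_add]; congr 1; omega
    rw [div_mul_div_comm, neg_mul_neg, hd]
  calc |∑ A ∈ range (2^b), ∑ B ∈ range (2^(n-a)),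
        Phi m ξ n a b (A*2^(n+1-b)) (B*2^(a+1)) *
          ((∑ r ∈ range (2^(n+1-b)), sg (n-b) r * gp n (A*2^(n+1-b)+r)) *
           (∑ s ∈ range (2^(a+1)), sg a s * gp n (B*2^(a+1)+s)))|
      ≤ ∑ A ∈ range (2^b), ∑ B ∈ range (2^(n-a)),
          |Phi m ξ n a b (A*2^(n+1-b)) (B*2^(a+1))| * (2^(2*(n-b)) * 2^(2*a) / 2^(2*n+2)) := by
        refine le_trans (Finset.abs_sum_le_sum_abs _ _) (Finset.sum_le_sum fun A _ => ?_)
        refine le_trans (Finset.abs_sum_le_sum_abs _ _) (Finset.sum_le_sum fun B _ => ?_)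
        rw [hx A, hy B, hC, abs_mul,
          abs_of_nonneg (show (0:ℝ) ≤ 2^(2*(n-b)) * 2^(2*a) / 2^(2*n+2) by positivity)]
    _ ≤ ∑ A ∈ range (2^b), ∑ B ∈ range (2^(n-a)),
          ((5/4:ℝ)^(b-a-1)) * (2^(2*(n-b)) * 2^(2*a) / 2^(2*n+2)) := by
        refine Finset.sum_le_sum fun A _ => Finset.sum_le_sum fun B _ => ?_
        exact mul_le_mul_of_nonneg_right (abs_Phi_le a b _ _) (by positivity)
    _ = (2:ℝ)^b * 2^(n-a) * ((5/4)^(b-a-1) * (2^(2*(n-b)) * 2^(2*a) / 2^(2*n+2))) := by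
        rw [Finset.sum_const, Finset.sum_const, Finset.card_range, Finset.card_range]
        push_cast
        ring
    _ = (5/4)^(b-a-1) * (2^(n-b) * 2^a) / 4 := by
        have key : (2:ℝ)^b * 2^(n-a) * (2^(2*(n-b)) * 2^(2*a)) * 4
            = (2^(n-b) * 2^a) * 2^(2*n+2) := by
          have e1 : (2:ℝ)^b * 2^(n-a) * (2^(2*(n-b)) * 2^(2*a)) * 4
              = 2^(b + (n-a) + 2*(n-b) + 2*a + 2) := by
            rw [show ((4:ℝ)) = 2^2 by norm_num]
            rw [← pow_add, ← pow_add, ← pow_add, ← pow_add]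
            congr 1
            omega
          have e2 : ((2:ℝ)^(n-b) * 2^a) * 2^(2*n+2) = 2^((n-b) + a + (2*n+2)) := by
            rw [← pow_add, ← pow_add]
          rw [e1, e2]
          congr 1
          omega
        have hZ : (0:ℝ) < 2^(2*n+2) := by positivity
        rw [eq_div_iff (by norm_num : (4:ℝ) ≠ 0)]
        have hstep : (2:ℝ)^b * 2^(n-a) * ((5/4)^(b-a-1) * (2^(2*(n-b)) * 2^(2*a) / 2^(2*n+2))) * 4
            = (5/4)^(b-a-1) * ((2^b * 2^(n-a) * (2^(2*(n-b)) * 2^(2*a)) * 4) / 2^(2*n+2)) := by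
          ring
        rw [hstep, key]
        congr 1
        exact mul_div_cancel_right₀ _ (ne_of_gt hZ)

def Rfun (m : ℕ) (ξ : Fin m → Fin 2 → ℝ) (n i j : ℕ) : ℝ :=
  ∏ k ∈ range (n+1), (1 + 4⁻¹ * f m ξ n k i j)

lemma prod_one_add (g : ℕ → ℝ) (N' : ℕ) :
    ∏ k ∈ range N', (1 + g k) = 1 + ∑ b ∈ range N', g b * ∏ k ∈ range b, (1 + g k) := by
  induction N' with
  | zero => simp
  | succ N ih =>
      rw [Finset.prod_range_succ, Finset.sum_range_succ, ih]
      ring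

lemma prod_one_add' (g : ℕ → ℝ) (b : ℕ) :
    ∏ k ∈ range b, (1 + g k) = 1 + ∑ a ∈ range b, g a * ∏ k ∈ Finset.Ioo a b, (1 + g k) := by
  induction b with
  | zero => simp
  | succ b ih =>
      rw [Finset.prod_range_succ, ih, Finset.sum_range_succ]
      have h1 : ∀ a ∈ range b, g a * ∏ k ∈ Finset.Ioo a (b+1), (1+g k)
          = (g a * ∏ k ∈ Finset.Ioo a b, (1+g k)) * (1+g b) := by
        intro a ha
        rw [mem_range] at ha
        have hset : Finset.Ioo a (b+1) = insert b (Finset.Ioo a b) := by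
          ext x
          simp only [Finset.mem_Ioo, Finset.mem_insert]
          omega
        rw [hset, Finset.prod_insert (by simp)]
        ring
      rw [Finset.sum_congr rfl h1, show Finset.Ioo b (b+1) = ∅ from by
        ext x; simp only [Finset.mem_Ioo, Finset.notMem_empty, iff_false]; omega]
      rw [Finset.prod_empty, ← Finset.sum_mul]
      ring

lemma R_expand (i j : ℕ) : Rfun m ξ n i j
    = 1 + (∑ b ∈ range (n+1), 4⁻¹ * (f m ξ n b i j))
      + ∑ b ∈ range (n+1), ∑ a ∈ range b, 16⁻¹ * Phi m ξ n a b i j := by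
  unfold Rfun
  rw [prod_one_add (fun k => 4⁻¹ * f m ξ n k i j) (n+1)]
  have h1 : ∀ b ∈ range (n+1), (4⁻¹ * f m ξ n b i j) * ∏ k ∈ range b, (1 + 4⁻¹ * f m ξ n k i j)
      = 4⁻¹ * (f m ξ n b i j) + ∑ a ∈ range b, 16⁻¹ * Phi m ξ n a b i j := by
    intro b _
    rw [prod_one_add' (fun k => 4⁻¹ * f m ξ n k i j) b]
    rw [mul_add, mul_one, Finset.mul_sum]
    congr 1
    refine Finset.sum_congr rfl fun a _ => ?_
    unfold Phi
    ring
  rw [Finset.sum_congr rfl h1, Finset.sum_add_distrib]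
  ring

lemma swap_ij_k {α : Type*} {N1 N2 : ℕ} {K : Finset α} (F : ℕ → ℕ → α → ℝ) :
    ∑ i ∈ range N1, ∑ j ∈ range N2, ∑ k ∈ K, F i j k
      = ∑ k ∈ K, ∑ i ∈ range N1, ∑ j ∈ range N2, F i j k := by
  rw [Finset.sum_congr rfl (fun i (_ : i ∈ range N1) => Finset.sum_comm)]
  exact Finset.sum_comm

lemma expand_sum (W : ℕ → ℕ → ℝ) :
    ∑ i ∈ range (2^(n+1)), ∑ j ∈ range (2^(n+1)), (Rfun m ξ n i j - 1) * (W i j)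
      = 4⁻¹ * (∑ b ∈ range (n+1), ∑ i ∈ range (2^(n+1)), ∑ j ∈ range (2^(n+1)),
            f m ξ n b i j * (W i j))
        + 16⁻¹ * (∑ b ∈ range (n+1), ∑ a ∈ range b, ∑ i ∈ range (2^(n+1)), ∑ j ∈ range (2^(n+1)),
            Phi m ξ n a b i j * (W i j)) := by
  have point : ∀ i j : ℕ, (Rfun m ξ n i j - 1) * (W i j)
      = (∑ b ∈ range (n+1), 4⁻¹ * (f m ξ n b i j * (W i j)))
        + ∑ b ∈ range (n+1), (∑ a ∈ range b, 16⁻¹ * (Phi m ξ n a b i j * (W i j))) := by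
    intro i j
    have hR : Rfun m ξ n i j - 1
        = (∑ b ∈ range (n+1), 4⁻¹ * (f m ξ n b i j))
          + ∑ b ∈ range (n+1), ∑ a ∈ range b, 16⁻¹ * Phi m ξ n a b i j := by
      rw [R_expand]; ring
    rw [hR, add_mul, Finset.sum_mul, Finset.sum_mul]
    congr 1
    · exact Finset.sum_congr rfl fun b _ => by ring
    · refine Finset.sum_congr rfl fun b _ => ?_
      rw [Finset.sum_mul]
      exact Finset.sum_congr rfl fun a _ => by ring
  rw [Finset.sum_congr rfl (fun i (_ : i ∈ range (2^(n+1))) => Finset.sum_congr rfl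
    (fun j (_ : j ∈ range (2^(n+1))) => point i j))]
  rw [Finset.sum_congr rfl (fun i (_ : i ∈ range (2^(n+1))) => Finset.sum_add_distrib),
    Finset.sum_add_distrib]
  congr 1
  · rw [swap_ij_k (fun i j b => 4⁻¹ * (f m ξ n b i j * (W i j))), Finset.mul_sum]
    refine Finset.sum_congr rfl fun b _ => ?_
    rw [Finset.mul_sum]
    refine Finset.sum_congr rfl fun i _ => ?_
    rw [Finset.mul_sum]
  · rw [swap_ij_k (fun i j b => ∑ a ∈ range b, 16⁻¹ * (Phi m ξ n a b i j * (W i j))),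
      Finset.mul_sum]
    refine Finset.sum_congr rfl fun b _ => ?_
    rw [swap_ij_k (fun i j a => 16⁻¹ * (Phi m ξ n a b i j * (W i j))), Finset.mul_sum]
    refine Finset.sum_congr rfl fun a _ => ?_
    rw [Finset.mul_sum]
    refine Finset.sum_congr rfl fun i _ => ?_
    rw [Finset.mul_sum]

lemma disc_eval (i j : ℕ) : disc 2 m ξ ![gp n i, gp n j]
    = gp n i * gp n j - (1/m) * ∑ μ : Fin m,
        ((if ξ μ 0 < gp n i then (1:ℝ) else 0) * (if ξ μ 1 < gp n j then (1:ℝ) else 0)) := by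
  unfold disc
  congr 1
  · rw [Fin.prod_univ_two]
    simp
  · congr 1
    rw [Finset.card_filter]
    push_cast
    refine Finset.sum_congr rfl fun μ _ => ?_
    have hiff : (∀ t : Fin 2, ξ μ t < (![gp n i, gp n j] : Fin 2 → ℝ) t)
        ↔ (ξ μ 0 < gp n i ∧ ξ μ 1 < gp n j) := by
      rw [Fin.forall_fin_two]
      simp
    rw [if_congr hiff rfl rfl]
    by_cases h1 : ξ μ 0 < gp n i <;> by_cases h2 : ξ μ 1 < gp n j <;> simp [h1, h2]

lemma test_decomp (φ : ℕ → ℕ → ℝ) (N1 N2 : ℕ) :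
    ∑ i ∈ range N1, ∑ j ∈ range N2, φ i j * disc 2 m ξ ![gp n i, gp n j]
      = (∑ i ∈ range N1, ∑ j ∈ range N2, φ i j * (gp n i * gp n j))
        - (1/m) * ∑ μ : Fin m, ∑ i ∈ range N1, ∑ j ∈ range N2,
            φ i j * ((if ξ μ 0 < gp n i then (1:ℝ) else 0) * (if ξ μ 1 < gp n j then (1:ℝ) else 0)) := by
  have point : ∀ i j : ℕ, φ i j * disc 2 m ξ ![gp n i, gp n j]
      = φ i j * (gp n i * gp n j) - ∑ μ : Fin m, (1/m:ℝ) *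
          (φ i j * ((if ξ μ 0 < gp n i then (1:ℝ) else 0) * (if ξ μ 1 < gp n j then (1:ℝ) else 0))) := by
    intro i j
    rw [disc_eval i j, mul_sub]
    congr 1
    rw [Finset.mul_sum, Finset.mul_sum]
    refine Finset.sum_congr rfl fun μ _ => ?_
    ring
  rw [Finset.sum_congr rfl (fun i (_ : i ∈ range N1) => Finset.sum_congr rfl
    (fun j (_ : j ∈ range N2) => point i j))]
  rw [Finset.sum_congr rfl (fun i (_ : i ∈ range N1) => Finset.sum_sub_distrib _ _),
    Finset.sum_sub_distrib]
  congr 1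
  rw [swap_ij_k (K := (Finset.univ : Finset (Fin m)))
    (fun i j μ => (1/m:ℝ) * (φ i j * ((if ξ μ 0 < gp n i then (1:ℝ) else 0) * (if ξ μ 1 < gp n j then (1:ℝ) else 0))))]
  rw [Finset.mul_sum]
  refine Finset.sum_congr rfl fun μ _ => ?_
  rw [Finset.mul_sum]
  refine Finset.sum_congr rfl fun i _ => ?_
  rw [Finset.mul_sum]

lemma geo_b (b : ℕ) : ∑ a ∈ range b, (5/4:ℝ)^(b-a-1) * 2^a ≤ (4/3) * 2^b := by
  rcases Nat.eq_zero_or_pos b with hb0 | hb0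
  · subst hb0; simp; norm_num
  rw [← Finset.sum_range_reflect]
  have hterm : ∀ t ∈ range b, (5/4:ℝ)^(b-(b-1-t)-1) * 2^(b-1-t) = 2^(b-1) * (5/8)^t := by
    intro t ht
    rw [mem_range] at ht
    have h1 : b-(b-1-t)-1 = t := by omega
    have h2 : (2:ℝ)^(b-1-t) * 2^t = 2^(b-1) := by rw [← pow_add]; congr 1; omega
    rw [h1, show ((5:ℝ)/8) = (5/4)/2 by norm_num, div_pow, ← h2]
    have h3 : (2:ℝ)^t ≠ 0 := by positivity
    field_simp
    rw [← mul_pow, ← mul_pow]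
    norm_num
  rw [Finset.sum_congr rfl hterm, ← Finset.mul_sum]
  have hgeom : ∑ t ∈ range b, ((5:ℝ)/8)^t ≤ 8/3 := by
    rw [geom_sum_eq (by norm_num : ((5:ℝ)/8) ≠ 1)]
    have h4 : (0:ℝ) ≤ (5/8)^b := by positivity
    rw [div_le_iff_of_neg (by norm_num : ((5:ℝ)/8) - 1 < 0)]
    linarith
  have h5 : (2:ℝ)^b = 2 * 2^(b-1) := by
    rw [← pow_succ']
    congr 1
    omega
  calc (2:ℝ)^(b-1) * ∑ t ∈ range b, ((5:ℝ)/8)^t ≤ 2^(b-1) * (8/3) := by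
        exact mul_le_mul_of_nonneg_left hgeom (by positivity)
    _ = (4/3) * 2^b := by rw [h5]; ring

lemma gp_mem {i : ℕ} (hi : i < 2^(n+1)) : gp n i ∈ Set.Ico (0:ℝ) 1 := by
  unfold gp
  constructor
  · positivity
  · rw [div_lt_one (by positivity)]
    have h1 : (i:ℝ) + 1 ≤ 2^(n+1) := by exact_mod_cast hi
    have h2 : (2:ℝ)^(n+2) = 2 * 2^(n+1) := by rw [pow_succ']
    rw [h2]
    linarith

lemma abs_disc_le_two (y : Fin 2 → ℝ) (hy : y ∈ Set.univ.pi fun _ : Fin 2 => Set.Ico (0:ℝ) 1) :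
    |disc 2 m ξ y| ≤ 2 := by
  have hy0 := hy 0 (Set.mem_univ _)
  have hy1 := hy 1 (Set.mem_univ _)
  unfold disc
  rw [Fin.prod_univ_two, abs_le]
  have hcard : ((Finset.filter (fun μ : Fin m => ∀ t, ξ μ t < y t) Finset.univ).card : ℝ) ≤ m := by
    exact_mod_cast Finset.card_le_card (Finset.filter_subset _ _) |>.trans (le_of_eq (Finset.card_univ.trans (Fintype.card_fin m)))
  have hcard0 : (0:ℝ) ≤ ((Finset.filter (fun μ : Fin m => ∀ t, ξ μ t < y t) Finset.univ).card : ℝ) := by positivity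
  rcases Nat.eq_zero_or_pos m with hm0 | hm0
  · subst hm0
    constructor <;> nlinarith [hy0.1, hy0.2, hy1.1, hy1.2]
  · have hm' : (0:ℝ) < m := by exact_mod_cast hm0
    have h1 : (1/(m:ℝ)) * ((Finset.filter (fun μ : Fin m => ∀ t, ξ μ t < y t) Finset.univ).card : ℝ) ≤ 1 := by
      rw [div_mul_eq_mul_div, one_mul, div_le_one hm']
      exact hcard
    have h2 : (0:ℝ) ≤ (1/(m:ℝ)) * ((Finset.filter (fun μ : Fin m => ∀ t, ξ μ t < y t) Finset.univ).card : ℝ) := by positivity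
    constructor <;> nlinarith [hy0.1, hy0.2, hy1.1, hy1.2]

lemma abs_disc_le_Dinf (y : Fin 2 → ℝ) (hy : y ∈ Set.univ.pi fun _ : Fin 2 => Set.Ico (0:ℝ) 1) :
    |disc 2 m ξ y| ≤ Dinf 2 m ξ := by
  have hbdd : BddAbove (Set.range fun b : ↥(Set.univ.pi fun _ : Fin 2 => Set.Ico (0:ℝ) 1) =>
      |disc 2 m ξ (b : Fin 2 → ℝ)|) := by
    refine ⟨2, ?_⟩
    rintro x ⟨z, rfl⟩
    exact abs_disc_le_two (z : Fin 2 → ℝ) z.2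
  exact le_ciSup hbdd (⟨y, hy⟩ : ↥(Set.univ.pi fun _ : Fin 2 => Set.Ico (0:ℝ) 1))

lemma Dinf_nonneg : 0 ≤ Dinf 2 m ξ := by
  refine le_trans (abs_nonneg _) (abs_disc_le_Dinf (fun _ => 0) ?_)
  intro t _
  exact ⟨le_refl _, by norm_num⟩

lemma Rfun_nonneg (i j : ℕ) : 0 ≤ Rfun m ξ n i j :=
  Finset.prod_nonneg fun k _ => one_add_f_nonneg k i j

-- per-level disc bounds, stated over the full grid range
lemma single_disc_ge {b : ℕ} (hb : b ≤ n) (h2m : 2*m ≤ 2^n) :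
    ((2:ℝ)^n)/8 ≤ ∑ i ∈ range (2^(n+1)), ∑ j ∈ range (2^(n+1)),
        f m ξ n b i j * disc 2 m ξ ![gp n i, gp n j] := by
  rw [test_decomp]
  have hcnt : ∀ μ : Fin m, ∑ i ∈ range (2^(n+1)), ∑ j ∈ range (2^(n+1)),
      f m ξ n b i j * ((if ξ μ 0 < gp n i then (1:ℝ) else 0) * (if ξ μ 1 < gp n j then (1:ℝ) else 0)) = 0 := by
    intro μ
    have h1 := single_cnt (m := m) (ξ := ξ) (n := n) hb (ξ μ 0) (ξ μ 1) ?_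
    · rw [grid_split_x hb, grid_split_y hb] at h1
      exact h1
    · intro A B hx hy
      rw [real_div_pow A (n+1-b) b (n+1) (by omega)] at hx
      rw [real_div_pow (A+1) (n+1-b) b (n+1) (by omega)] at hx
      rw [real_div_pow B (b+1) (n-b) (n+1) (by omega)] at hy
      rw [real_div_pow (B+1) (b+1) (n-b) (n+1) (by omega)] at hy
      rw [hit_base_iff]
      refine ⟨μ, ⟨hx.1, ?_⟩, hy.1, ?_⟩
      · have := hx.2; push_cast at this; exact this
      · have := hy.2; push_cast at this; exact this
  rw [Finset.sum_congr rfl (fun μ (_ : μ ∈ (Finset.univ : Finset (Fin m))) => hcnt μ)]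
  rw [Finset.sum_const_zero, mul_zero, sub_zero]
  have hgp := single_gp (m := m) (ξ := ξ) (n := n) hb
  rw [grid_split_x hb, grid_split_y hb] at hgp
  rw [hgp]
  have hec := empty_count_ge (m := m) (ξ := ξ) (n := n) hb
  have hm' : (m:ℝ) ≤ 2^n/2 := by
    have : (2*m : ℕ) ≤ 2^n := h2m
    have h2 : ((2*m : ℕ):ℝ) ≤ ((2^n : ℕ):ℝ) := by exact_mod_cast this
    push_cast at h2
    linarith
  linarith

lemma pair_disc_bound {a b : ℕ} (hab : a < b) (hb : b ≤ n) :
    |∑ i ∈ range (2^(n+1)), ∑ j ∈ range (2^(n+1)),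
        Phi m ξ n a b i j * disc 2 m ξ ![gp n i, gp n j]| ≤ (5/4)^(b-a-1) * (2^(n-b) * 2^a) / 4 := by
  rw [test_decomp]
  have ha : a ≤ n := by omega
  have hcnt : ∀ μ : Fin m, ∑ i ∈ range (2^(n+1)), ∑ j ∈ range (2^(n+1)),
      Phi m ξ n a b i j * ((if ξ μ 0 < gp n i then (1:ℝ) else 0) * (if ξ μ 1 < gp n j then (1:ℝ) else 0)) = 0 := by
    intro μ
    have h1 := pair_cnt (m := m) (ξ := ξ) (n := n) hab hb μ
    rw [grid_split_x hb, grid_split_y ha] at h1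
    exact h1
  rw [Finset.sum_congr rfl (fun μ (_ : μ ∈ (Finset.univ : Finset (Fin m))) => hcnt μ)]
  rw [Finset.sum_const_zero, mul_zero, sub_zero]
  have hgp := pair_gp_bound (m := m) (ξ := ξ) (n := n) hab hb
  rw [grid_split_x hb, grid_split_y ha] at hgp
  exact hgp

lemma single_one' {b : ℕ} (hb : b ≤ n) :
    ∑ i ∈ range (2^(n+1)), ∑ j ∈ range (2^(n+1)), f m ξ n b i j * ((1:ℝ) * 1) = 0 := by
  have h1 := single_one (m := m) (ξ := ξ) (n := n) hb
  rw [grid_split_x hb, grid_split_y hb] at h1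
  exact h1

lemma pair_one' {a b : ℕ} (hab : a < b) (hb : b ≤ n) :
    ∑ i ∈ range (2^(n+1)), ∑ j ∈ range (2^(n+1)), Phi m ξ n a b i j * ((1:ℝ) * 1) = 0 := by
  have h1 := pair_one (m := m) (ξ := ξ) (n := n) hab hb
  rw [grid_split_x hb, grid_split_y (show a ≤ n by omega)] at h1
  exact h1

lemma geo_n {b : ℕ} (hb : b ≤ n) :
    ∑ a ∈ range b, (5/4:ℝ)^(b-a-1) * (2^(n-b) * 2^a) / 4 ≤ 2^n/3 := by
  have h1 : ∑ a ∈ range b, (5/4:ℝ)^(b-a-1) * (2^(n-b) * 2^a) / 4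
      = (2^(n-b)/4) * ∑ a ∈ range b, (5/4:ℝ)^(b-a-1) * 2^a := by
    rw [Finset.mul_sum]
    exact Finset.sum_congr rfl fun a _ => by ring
  rw [h1]
  have h2 : (2:ℝ)^(n-b) * 2^b = 2^n := by rw [← pow_add]; congr 1; omega
  calc (2^(n-b)/4) * ∑ a ∈ range b, (5/4:ℝ)^(b-a-1) * 2^a
      ≤ (2^(n-b)/4) * ((4/3) * 2^b) := by
        exact mul_le_mul_of_nonneg_left (geo_b b) (by positivity)
    _ = 2^n/3 := by
        rw [show ((2:ℝ)^(n-b)/4) * ((4/3) * 2^b) = (2^(n-b) * 2^b)/3 by ring, h2]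

lemma vec_mem {i j : ℕ} (hi : i < 2^(n+1)) (hj : j < 2^(n+1)) :
    (![gp n i, gp n j] : Fin 2 → ℝ) ∈ Set.univ.pi fun _ : Fin 2 => Set.Ico (0:ℝ) 1 := by
  intro t _
  fin_cases t
  · simpa using gp_mem hi
  · simpa using gp_mem hj

theorem core (h2m : 2*m ≤ 2^n) :
    ((n:ℝ)+1) * 2^n / 96 ≤ Dinf 2 m ξ * 2^(2*n+3) := by
  have hTexp := expand_sum (m := m) (ξ := ξ) (n := n)
    (fun i j => disc 2 m ξ ![gp n i, gp n j])
  set T := ∑ i ∈ range (2^(n+1)), ∑ j ∈ range (2^(n+1)),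
    (Rfun m ξ n i j - 1) * disc 2 m ξ ![gp n i, gp n j] with hT
  -- lower bound on the main part
  have hmain : ((n:ℝ)+1) * (2^n/8) ≤ ∑ b ∈ range (n+1), ∑ i ∈ range (2^(n+1)), ∑ j ∈ range (2^(n+1)),
      f m ξ n b i j * disc 2 m ξ ![gp n i, gp n j] := by
    calc ((n:ℝ)+1) * (2^n/8) = ∑ _b ∈ range (n+1), ((2:ℝ)^n/8) := by
          rw [Finset.sum_const, Finset.card_range, nsmul_eq_mul]
          push_cast
          ring
      _ ≤ _ := Finset.sum_le_sum fun b hbmem => by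
          rw [mem_range] at hbmem
          exact single_disc_ge (by omega) h2m
  have herr : |∑ b ∈ range (n+1), ∑ a ∈ range b, ∑ i ∈ range (2^(n+1)), ∑ j ∈ range (2^(n+1)),
      Phi m ξ n a b i j * disc 2 m ξ ![gp n i, gp n j]| ≤ ((n:ℝ)+1) * (2^n/3) := by
    refine le_trans (Finset.abs_sum_le_sum_abs _ _) ?_
    calc ∑ b ∈ range (n+1), |∑ a ∈ range b, ∑ i ∈ range (2^(n+1)), ∑ j ∈ range (2^(n+1)),
          Phi m ξ n a b i j * disc 2 m ξ ![gp n i, gp n j]|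
        ≤ ∑ b ∈ range (n+1), ((2:ℝ)^n/3) := by
          refine Finset.sum_le_sum fun b hbmem => ?_
          rw [mem_range] at hbmem
          refine le_trans (Finset.abs_sum_le_sum_abs _ _) ?_
          refine le_trans (Finset.sum_le_sum fun a hamem => ?_) (geo_n (show b ≤ n by omega))
          rw [mem_range] at hamem
          exact pair_disc_bound hamem (by omega)
      _ = ((n:ℝ)+1) * (2^n/3) := by
          rw [Finset.sum_const, Finset.card_range, nsmul_eq_mul]
          push_cast
          ring
  have hTlow : ((n:ℝ)+1) * 2^n / 96 ≤ T := by
    rw [hTexp]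
    have h1 := neg_abs_le (∑ b ∈ range (n+1), ∑ a ∈ range b, ∑ i ∈ range (2^(n+1)), ∑ j ∈ range (2^(n+1)),
      Phi m ξ n a b i j * disc 2 m ξ ![gp n i, gp n j])
    nlinarith [hmain, herr, h1]
  -- upper bound: T ≤ D * 2^(2n+3)
  have hzero : ∑ i ∈ range (2^(n+1)), ∑ j ∈ range (2^(n+1)), (Rfun m ξ n i j - 1) * ((1:ℝ)*1) = 0 := by
    rw [expand_sum (m := m) (ξ := ξ) (n := n) (fun _ _ => (1:ℝ)*1)]
    have hz1 : ∀ b ∈ range (n+1), ∑ i ∈ range (2^(n+1)), ∑ j ∈ range (2^(n+1)),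
        f m ξ n b i j * ((1:ℝ)*1) = 0 := by
      intro b hbmem
      rw [mem_range] at hbmem
      exact single_one' (by omega)
    have hz2 : ∀ b ∈ range (n+1), ∑ a ∈ range b, ∑ i ∈ range (2^(n+1)), ∑ j ∈ range (2^(n+1)),
        Phi m ξ n a b i j * ((1:ℝ)*1) = 0 := by
      intro b hbmem
      rw [mem_range] at hbmem
      exact Finset.sum_eq_zero fun a hamem => by
        rw [mem_range] at hamem
        exact pair_one' hamem (by omega)
    rw [Finset.sum_congr rfl hz1, Finset.sum_congr rfl hz2]
    simp
  have habs : ∑ i ∈ range (2^(n+1)), ∑ j ∈ range (2^(n+1)), |Rfun m ξ n i j - 1| ≤ 2^(2*n+3) := by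
    have hpt : ∀ i j : ℕ, |Rfun m ξ n i j - 1| ≤ (Rfun m ξ n i j - 1) * ((1:ℝ)*1) + 2 := by
      intro i j
      have h0 := Rfun_nonneg (m := m) (ξ := ξ) (n := n) i j
      rw [abs_le]
      constructor <;> nlinarith
    calc ∑ i ∈ range (2^(n+1)), ∑ j ∈ range (2^(n+1)), |Rfun m ξ n i j - 1|
        ≤ ∑ i ∈ range (2^(n+1)), ∑ j ∈ range (2^(n+1)),
            ((Rfun m ξ n i j - 1) * ((1:ℝ)*1) + 2) := by
          exact Finset.sum_le_sum fun i _ => Finset.sum_le_sum fun j _ => hpt i j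
      _ = (∑ i ∈ range (2^(n+1)), ∑ j ∈ range (2^(n+1)), (Rfun m ξ n i j - 1) * ((1:ℝ)*1))
          + ∑ i ∈ range (2^(n+1)), ∑ j ∈ range (2^(n+1)), (2:ℝ) := by
          rw [← Finset.sum_add_distrib]
          exact Finset.sum_congr rfl fun i _ => by rw [← Finset.sum_add_distrib]
      _ = 2^(2*n+3) := by
          rw [hzero, zero_add, Finset.sum_const, Finset.sum_const, Finset.card_range,
            nsmul_eq_mul, nsmul_eq_mul]
          push_cast
          rw [show ((2:ℝ)^(n+1) * (2^(n+1) * 2)) = 2^((n+1)+(n+1)+1) by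
            rw [pow_add, pow_add, pow_one]; ring]
          congr 1
          omega
  have hup : T ≤ Dinf 2 m ξ * 2^(2*n+3) := by
    have hptle : ∀ i ∈ range (2^(n+1)), ∀ j ∈ range (2^(n+1)),
        (Rfun m ξ n i j - 1) * disc 2 m ξ ![gp n i, gp n j]
          ≤ |Rfun m ξ n i j - 1| * Dinf 2 m ξ := by
      intro i hi j hj
      rw [mem_range] at hi hj
      calc (Rfun m ξ n i j - 1) * disc 2 m ξ ![gp n i, gp n j]
          ≤ |(Rfun m ξ n i j - 1) * disc 2 m ξ ![gp n i, gp n j]| := le_abs_self _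
        _ = |Rfun m ξ n i j - 1| * |disc 2 m ξ ![gp n i, gp n j]| := abs_mul _ _
        _ ≤ |Rfun m ξ n i j - 1| * Dinf 2 m ξ := by
            exact mul_le_mul_of_nonneg_left (abs_disc_le_Dinf _ (vec_mem hi hj)) (abs_nonneg _)
    calc T ≤ ∑ i ∈ range (2^(n+1)), ∑ j ∈ range (2^(n+1)), |Rfun m ξ n i j - 1| * Dinf 2 m ξ := by
          rw [hT]
          exact Finset.sum_le_sum fun i hi => Finset.sum_le_sum fun j hj => hptle i hi j hj
      _ = (∑ i ∈ range (2^(n+1)), ∑ j ∈ range (2^(n+1)), |Rfun m ξ n i j - 1|) * Dinf 2 m ξ := by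
          rw [Finset.sum_mul]
          exact Finset.sum_congr rfl fun i _ => by rw [Finset.sum_mul]
      _ ≤ 2^(2*n+3) * Dinf 2 m ξ := by
          exact mul_le_mul_of_nonneg_right habs (Dinf_nonneg)
      _ = Dinf 2 m ξ * 2^(2*n+3) := by ring
  linarith

theorem final (hm : 2 ≤ m) : (1/3072 : ℝ) * (m:ℝ)⁻¹ * Real.log m ≤ Dinf 2 m ξ := by
  set n := Nat.clog 2 (2*m) with hn
  have h2m : 2*m ≤ 2^n := Nat.le_pow_clog (by norm_num) _
  have hn1 : 1 ≤ n := by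
    by_contra h
    push_neg at h
    have : n = 0 := by omega
    rw [this] at h2m
    simp at h2m
    omega
  have hnlt : 2^n ≤ 4*m := by
    have hpred := Nat.pow_pred_clog_lt_self (by norm_num : 1 < 2) (show 1 < 2*m by omega)
    rw [← hn] at hpred
    have hpred2 : 2^(n-1) < 2*m := by
      have heq : n.pred = n - 1 := rfl
      rwa [heq] at hpred
    have h2 : 2^n = 2*2^(n-1) := by
      rw [← pow_succ']
      congr 1
      omega
    omega
  have hcore := core (m := m) (ξ := ξ) (n := n) h2m
  have hMn : Real.log m ≤ (n:ℝ) := by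
    have h1 : (m:ℝ) ≤ 2^n := by
      have : (m : ℕ) ≤ 2^n := by omega
      exact_mod_cast this
    have h2 : Real.log m ≤ Real.log (2^n) := Real.log_le_log (by positivity) h1
    rw [Real.log_pow] at h2
    have h3 : Real.log 2 ≤ 1 := by
      have := Real.log_two_lt_d9
      linarith
    have h4 : (0:ℝ) ≤ n := Nat.cast_nonneg n
    nlinarith
  have hpow : (2:ℝ)^(n+3) ≤ 32*m := by
    have h1 : ((2:ℕ)^n : ℝ) ≤ ((4*m : ℕ) : ℝ) := by exact_mod_cast hnlt
    push_cast at h1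
    rw [pow_add]
    norm_num
    nlinarith
  have key : Real.log m / (3072*m) ≤ ((n:ℝ)+1) / (96 * 2^(n+3)) := by
    apply div_le_div₀ (by positivity) (by linarith) (by positivity)
    nlinarith
  have key2 : ((n:ℝ)+1)/(96*2^(n+3)) ≤ Dinf 2 m ξ := by
    rw [div_le_iff₀ (by positivity)]
    have hsplit : (2:ℝ)^(2*n+3) = 2^n * 2^(n+3) := by rw [← pow_add]; congr 1; omega
    rw [hsplit] at hcore
    have h2n : (0:ℝ) < 2^n := by positivity
    have h2n3 : (0:ℝ) < 2^(n+3) := by positivity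
    have hD := Dinf_nonneg (m := m) (ξ := ξ)
    nlinarith
  have hm0 : (0:ℝ) < m := by
    have : (0:ℕ) < m := by omega
    exact_mod_cast this
  calc (1/3072 : ℝ) * (m:ℝ)⁻¹ * Real.log m = Real.log m/(3072*m) := by
        field_simp
    _ ≤ ((n:ℝ)+1) / (96 * 2^(n+3)) := key
    _ ≤ Dinf 2 m ξ := key2

end
end Schmidt

/-- (Schmidt, 1972) There is an absolute constant C > 0 such that every m-point set xi in [0,1)^2 with m >= 2 satisfies D_inf(xi) >= C * m^(-1) * log m. -/
theorem statement2 :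
    ∃ C : ℝ, 0 < C ∧
      ∀ m : ℕ, 2 ≤ m → ∀ ξ : Fin m → Fin 2 → ℝ,
        (∀ μ j, ξ μ j ∈ Set.Ico (0 : ℝ) 1) →
        C * (m : ℝ)⁻¹ * Real.log m ≤ Dinf 2 m ξ := by
  refine ⟨1/3072, by norm_num, ?_⟩
  intro m hm ξ hξ
  exact Schmidt.final hm
end

section
/- (Frolov lattice) For every integer d ≥ 2 there exists an invertible real d×d matrix A such that the lattice L = {A·m : m ∈ ℤ^d} has the following two properties: (1) for every m ∈ ℤ^d with m ≠ 0, |∏_{j=1}^d (A·m)_j| ≥ 1; (2) every axis-parallel box P = ∏_{j=1}^d [a_j, b_j) ⊂ ℝ^d contains at most vol(P) + 1 points of L, where vol(P) = ∏_{j=1}^d (b_j − a_j). -/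
open Polynomial Finset

/-- Frolov's polynomial `∏_{j<d} (X - 4j) - 1` over `ℤ`. -/
noncomputable def frolovQ (d : ℕ) : Polynomial ℤ :=
  ∏ j ∈ Finset.range d, (Polynomial.X - Polynomial.C (4 * j : ℤ))

noncomputable def frolovP (d : ℕ) : Polynomial ℤ := frolovQ d - 1

lemma frolovQ_monic (d : ℕ) : (frolovQ d).Monic :=
  monic_prod_of_monic _ _ fun _ _ => monic_X_sub_C _

lemma frolovQ_natDegree (d : ℕ) : (frolovQ d).natDegree = d := by
  rw [frolovQ, natDegree_prod _ _ (fun j _ => X_sub_C_ne_zero _)]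
  simp only [natDegree_X_sub_C]
  simp

lemma frolovP_monic {d : ℕ} (hd : 1 ≤ d) : (frolovP d).Monic := by
  refine (frolovQ_monic d).sub_of_left ?_
  have h1 : degree (1 : Polynomial ℤ) ≤ 0 := degree_one_le
  have h2 : (frolovQ d).degree = (d : ℕ) := by
    rw [degree_eq_natDegree (frolovQ_monic d).ne_zero, frolovQ_natDegree]
  rw [h2]
  exact lt_of_le_of_lt h1 (by exact_mod_cast hd)

lemma frolovP_natDegree {d : ℕ} (hd : 1 ≤ d) : (frolovP d).natDegree = d := by
  rw [frolovP]
  rw [natDegree_sub_eq_left_of_natDegree_lt, frolovQ_natDegree]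
  rw [frolovQ_natDegree]
  simp; omega

lemma frolovP_eval_node {d j : ℕ} (hj : j < d) :
    (frolovP d).eval (4 * j : ℤ) = -1 := by
  have : (frolovQ d).eval (4 * j : ℤ) = 0 := by
    rw [frolovQ, eval_prod]
    exact Finset.prod_eq_zero (Finset.mem_range.mpr hj) (by simp)
  simp [frolovP, this]

lemma frolovQ_eval_sign {d j : ℕ} (hj : j ≤ d) :
    (2:ℤ)^d ≤ (-1)^(d-j) * (frolovQ d).eval (4*(j:ℤ) - 2) := by
  have heval : (frolovQ d).eval (4*(j:ℤ) - 2) =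
      ∏ k ∈ range d, (4*(j:ℤ) - 2 - 4*(k:ℕ)) := by
    simp [frolovQ, eval_prod]
  have hB : ∏ k ∈ Finset.Ico j d, (4*(j:ℤ) - 2 - 4*(k:ℕ)) =
      (-1)^(d-j) * ∏ k ∈ Finset.Ico j d, (4*(k:ℕ) + 2 - 4*(j:ℤ)) := by
    calc ∏ k ∈ Finset.Ico j d, (4*(j:ℤ) - 2 - 4*(k:ℕ))
        = ∏ k ∈ Finset.Ico j d, (-1) * (4*(k:ℕ) + 2 - 4*(j:ℤ)) :=
          Finset.prod_congr rfl (fun k _ => by ring)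
      _ = (-1)^(d-j) * ∏ k ∈ Finset.Ico j d, (4*(k:ℕ) + 2 - 4*(j:ℤ)) := by
          rw [Finset.prod_mul_distrib, Finset.prod_const, Nat.card_Ico]
  have hsq : ((-1:ℤ))^(d-j) * (-1)^(d-j) = 1 := by
    rw [← pow_add]; exact Even.neg_one_pow ⟨d-j, rfl⟩
  have hA : (2:ℤ)^j ≤ ∏ k ∈ range j, (4*(j:ℤ) - 2 - 4*(k:ℕ)) := by
    calc (2:ℤ)^j = ∏ _k ∈ range j, (2:ℤ) := by
          rw [Finset.prod_const, Finset.card_range]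
      _ ≤ _ := Finset.prod_le_prod (fun _ _ => by norm_num)
          (fun k hk => by have := Finset.mem_range.mp hk; omega)
  have hA0 : (0:ℤ) ≤ ∏ k ∈ range j, (4*(j:ℤ) - 2 - 4*(k:ℕ)) :=
    le_trans (by positivity) hA
  have hB' : (2:ℤ)^(d-j) ≤ ∏ k ∈ Finset.Ico j d, (4*(k:ℕ) + 2 - 4*(j:ℤ)) := by
    calc (2:ℤ)^(d-j) = ∏ _k ∈ Finset.Ico j d, (2:ℤ) := by
          rw [Finset.prod_const, Nat.card_Ico]
      _ ≤ _ := Finset.prod_le_prod (fun _ _ => by norm_num)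
          (fun k hk => by have := (Finset.mem_Ico.mp hk).1; omega)
  rw [heval, ← Finset.prod_range_mul_prod_Ico _ hj, hB]
  have hre : (-1:ℤ)^(d-j) * ((∏ k ∈ range j, (4*(j:ℤ) - 2 - 4*(k:ℕ))) *
      ((-1)^(d-j) * ∏ k ∈ Finset.Ico j d, (4*(k:ℕ) + 2 - 4*(j:ℤ)))) =
      ((∏ k ∈ range j, (4*(j:ℤ) - 2 - 4*(k:ℕ))) *
      (∏ k ∈ Finset.Ico j d, (4*(k:ℕ) + 2 - 4*(j:ℤ)))) * ((-1)^(d-j) * (-1)^(d-j)) := by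
    ring
  rw [hre, hsq, mul_one]
  calc (2:ℤ)^d = 2^j * 2^(d-j) := by rw [← pow_add, Nat.add_sub_cancel' hj]
    _ ≤ _ := mul_le_mul hA hB' (by positivity) hA0

lemma frolovP_eval_sign_even {d j : ℕ} (hd : 1 ≤ d) (hj : j ≤ d) (he : Even (d-j)) :
    1 ≤ (frolovP d).eval (4*(j:ℤ) - 2) := by
  have h := frolovQ_eval_sign hj
  rw [he.neg_one_pow, one_mul] at h
  have h2 : (2:ℤ) ≤ 2^d := by
    calc (2:ℤ) = 2^1 := (pow_one 2).symm
    _ ≤ 2^d := pow_le_pow_right₀ (by norm_num) hd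
  simp only [frolovP, eval_sub, eval_one]
  omega

lemma frolovP_eval_sign_odd {d j : ℕ} (hj : j ≤ d) (ho : Odd (d-j)) :
    (frolovP d).eval (4*(j:ℤ) - 2) ≤ -1 := by
  have h := frolovQ_eval_sign hj
  rw [ho.neg_one_pow] at h
  have h2 : (0:ℤ) ≤ 2^d := by positivity
  simp only [frolovP, eval_sub, eval_one]
  omega

lemma frolovP_irreducible {d : ℕ} (hd : 1 ≤ d) : Irreducible (frolovP d) := by
  constructor
  · intro hu
    have := natDegree_eq_zero_of_isUnit hu
    rw [frolovP_natDegree hd] at this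
    omega
  · intro a b hab
    by_contra hcon
    push_neg at hcon
    obtain ⟨ha, hb⟩ := hcon
    have hPne : frolovP d ≠ 0 := (frolovP_monic hd).ne_zero
    have ha0 : a ≠ 0 := fun h => hPne (by rw [hab, h, zero_mul])
    have hb0 : b ≠ 0 := fun h => hPne (by rw [hab, h, mul_zero])
    have hlc : a.leadingCoeff * b.leadingCoeff = 1 := by
      rw [← leadingCoeff_mul, ← hab]; exact frolovP_monic hd
    -- degrees positive
    have hdega : 1 ≤ a.natDegree := by
      by_contra h
      push_neg at h
      apply ha
      have h0 : a.natDegree = 0 := by omega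
      obtain ⟨c, rfl⟩ := natDegree_eq_zero.mp h0
      refine isUnit_C.mpr (IsUnit.of_mul_eq_one _ (?_ : c * b.leadingCoeff = 1))
      rwa [leadingCoeff_C] at hlc
    have hdegb : 1 ≤ b.natDegree := by
      by_contra h
      push_neg at h
      apply hb
      have h0 : b.natDegree = 0 := by omega
      obtain ⟨c, rfl⟩ := natDegree_eq_zero.mp h0
      refine isUnit_C.mpr (IsUnit.of_mul_eq_one _ (?_ : c * a.leadingCoeff = 1))
      rw [leadingCoeff_C] at hlc
      rw [mul_comm] at hlc
      exact hlc
    have hdegsum : a.natDegree + b.natDegree = d := by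
      rw [← natDegree_mul ha0 hb0, ← hab, frolovP_natDegree hd]
    -- a + b vanishes at all nodes
    have hnode : ∀ j < d, (a + b).eval (4*(j:ℤ)) = 0 := by
      intro j hj
      have h1 : a.eval (4*(j:ℤ)) * b.eval (4*(j:ℤ)) = -1 := by
        rw [← eval_mul, ← hab]
        exact frolovP_eval_node hj
      rw [eval_add]
      rcases Int.isUnit_iff.mp (isUnit_of_mul_isUnit_left (x := a.eval (4*(j:ℤ)))
        (y := b.eval (4*(j:ℤ))) (by rw [h1]; exact IsUnit.neg isUnit_one)) with h | h <;>
        simp only [h, one_mul, neg_one_mul, neg_eq_iff_eq_neg] at h1 <;> omega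
    -- so a + b = 0
    have hab0 : a + b = 0 := by
      apply Polynomial.eq_zero_of_natDegree_lt_card_of_eval_eq_zero' (a+b)
        ((Finset.range d).image (fun j : ℕ => (4*(j:ℤ))))
      · intro i hi
        obtain ⟨j, hj, rfl⟩ := Finset.mem_image.mp hi
        exact hnode j (Finset.mem_range.mp hj)
      · rw [Finset.card_image_of_injective _ (fun x y h => by omega), Finset.card_range]
        calc (a+b).natDegree ≤ max a.natDegree b.natDegree := natDegree_add_le a b
          _ < d := by omega
    -- contradiction with leading coefficient
    have hba : b = -a := by linear_combination hab0
    rw [hba] at hlc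
    rw [Polynomial.leadingCoeff_neg] at hlc
    nlinarith [sq_nonneg a.leadingCoeff]

lemma frolovP_irreducible_rat {d : ℕ} (hd : 1 ≤ d) :
    Irreducible ((frolovP d).map (Int.castRingHom ℚ)) :=
  (Polynomial.IsPrimitive.Int.irreducible_iff_irreducible_map_cast
    (frolovP_monic hd).isPrimitive).mp (frolovP_irreducible hd)

noncomputable def frolovR (d : ℕ) : Polynomial ℝ := (frolovP d).map (Int.castRingHom ℝ)

lemma frolovR_eval_int (d : ℕ) (z : ℤ) :
    (frolovR d).eval (z:ℝ) = (((frolovP d).eval z : ℤ) : ℝ) :=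
  eval_intCast_map _ _ _

lemma frolov_exists_roots {d : ℕ} (hd : 1 ≤ d) :
    ∀ j : ℕ, j < d →
      ∃ x : ℝ, x ∈ Set.Ioo (4*(j:ℝ) - 2) (4*(j:ℝ) + 2) ∧ (frolovR d).eval x = 0 := by
  intro j hj
  have hcont : ContinuousOn (fun x => (frolovR d).eval x)
      (Set.Icc (4*(j:ℝ)-2) (4*(j:ℝ)+2)) := ((frolovR d).continuous).continuousOn
  have hab : (4*(j:ℝ)-2) ≤ (4*(j:ℝ)+2) := by linarith
  have hleft : (frolovR d).eval (4*(j:ℝ)-2) = (((frolovP d).eval (4*(j:ℤ)-2) : ℤ) : ℝ) := by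
    rw [← frolovR_eval_int]
    norm_num
  have hright : (frolovR d).eval (4*(j:ℝ)+2) = (((frolovP d).eval (4*((j:ℤ)+1)-2) : ℤ) : ℝ) := by
    rw [← frolovR_eval_int]
    push_cast
    ring_nf
  rcases Nat.even_or_odd (d - j) with he | ho
  · -- f(left) ≥ 1, f(right) ≤ -1
    have h1 : (1:ℤ) ≤ (frolovP d).eval (4*(j:ℤ)-2) := frolovP_eval_sign_even hd hj.le he
    have hj1 : j + 1 ≤ d := hj
    have ho2 : Odd (d - (j+1)) := by
      rw [Nat.odd_iff]
      rw [Nat.even_iff] at he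
      omega
    have h2 : (frolovP d).eval (4*((j:ℤ)+1)-2) ≤ -1 := by
      have := frolovP_eval_sign_odd hj1 ho2
      push_cast at this ⊢
      convert this using 3
    have hmem : (0:ℝ) ∈ Set.Ioo ((frolovR d).eval (4*(j:ℝ)+2)) ((frolovR d).eval (4*(j:ℝ)-2)) := by
      rw [hleft, hright]
      constructor
      · exact_mod_cast (by omega : (frolovP d).eval (4*((j:ℤ)+1)-2) < 0)
      · exact_mod_cast (by omega : (0:ℤ) < (frolovP d).eval (4*(j:ℤ)-2))
    obtain ⟨x, hx1, hx2⟩ := intermediate_value_Ioo' hab hcont hmem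
    exact ⟨x, hx1, hx2⟩
  · have h1 : (frolovP d).eval (4*(j:ℤ)-2) ≤ -1 := frolovP_eval_sign_odd hj.le ho
    have hj1 : j + 1 ≤ d := hj
    have he2 : Even (d - (j+1)) := by
      rw [Nat.even_iff]
      rw [Nat.odd_iff] at ho
      omega
    have h2 : (1:ℤ) ≤ (frolovP d).eval (4*((j:ℤ)+1)-2) := by
      have := frolovP_eval_sign_even hd hj1 he2
      push_cast at this ⊢
      convert this using 3
    have hmem : (0:ℝ) ∈ Set.Ioo ((frolovR d).eval (4*(j:ℝ)-2)) ((frolovR d).eval (4*(j:ℝ)+2)) := by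
      rw [hleft, hright]
      constructor
      · exact_mod_cast (by omega : (frolovP d).eval (4*(j:ℤ)-2) < 0)
      · exact_mod_cast (by omega : (0:ℤ) < (frolovP d).eval (4*((j:ℤ)+1)-2))
    obtain ⟨x, hx1, hx2⟩ := intermediate_value_Ioo hab hcont hmem
    exact ⟨x, hx1, hx2⟩

lemma frolov_norm_int {d : ℕ} (hd : 1 ≤ d) (r : Fin d → ℝ)
    (hr : ∀ j, (frolovR d).eval (r j) = 0) (hinj : Function.Injective r)
    (m : Fin d → ℤ) (hm : m ≠ 0) :
    ∃ z : ℤ, z ≠ 0 ∧ (z : ℝ) = ∏ j, ∑ i, (m i : ℝ) * r j ^ (i : ℕ) := by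
  have hirr : Irreducible ((frolovP d).map (Int.castRingHom ℚ)) := frolovP_irreducible_rat hd
  haveI : Fact (Irreducible ((frolovP d).map (Int.castRingHom ℚ))) := ⟨hirr⟩
  set fQ : Polynomial ℚ := (frolovP d).map (Int.castRingHom ℚ) with hfQdef
  have hfQ0 : fQ ≠ 0 := hirr.ne_zero
  set K := AdjoinRoot fQ with hKdef
  set pb : PowerBasis ℚ K := AdjoinRoot.powerBasis hfQ0 with hpbdef
  haveI : FiniteDimensional ℚ K := Module.Finite.of_basis pb.basis
  have hdim : pb.dim = d := by
    rw [hpbdef]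
    show fQ.natDegree = d
    rw [hfQdef, (frolovP_monic hd).natDegree_map, frolovP_natDegree hd]
  set θ : K := AdjoinRoot.root fQ with hθdef
  -- θ is integral over ℤ
  have hint : IsIntegral ℤ θ := by
    refine ⟨frolovP d, frolovP_monic hd, ?_⟩
    have h1 : algebraMap ℤ K = (AdjoinRoot.of fQ).comp (Int.castRingHom ℚ) := by
      exact RingHom.ext_int _ _
    rw [h1, ← Polynomial.eval₂_map, ← hfQdef]
    exact AdjoinRoot.eval₂_root fQ
  -- the element ξ
  set ξ : K := ∑ i : Fin d, algebraMap ℤ K (m i) * θ ^ (i : ℕ) with hξdef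
  have hξint : IsIntegral ℤ ξ := by
    have : ξ ∈ integralClosure ℤ K := by
      refine Subalgebra.sum_mem _ fun i _ => mul_mem (Subalgebra.algebraMap_mem _ _) (pow_mem ?_ _)
      exact hint
    exact this
  -- ξ is nonzero
  have hξ0 : ξ ≠ 0 := by
    intro h0
    apply hm
    have hbasis : LinearIndependent ℚ fun i : Fin d => θ ^ (i : ℕ) := by
      have h1 := pb.basis.linearIndependent
      have h2 := h1.comp (finCongr hdim.symm) (finCongr hdim.symm).injective
      convert h2 using 1
      funext i
      rw [pb.coe_basis]
      rfl
      rfl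
    have hsum : ∑ i : Fin d, (m i : ℚ) • θ ^ (i : ℕ) = 0 := by
      rw [← h0, hξdef]
      refine Finset.sum_congr rfl fun i _ => ?_
      simp only [Algebra.smul_def, map_intCast, eq_intCast]
    have := Fintype.linearIndependent_iff.mp hbasis (fun i => (m i : ℚ)) hsum
    funext i
    have h3 : ((m i : ℚ)) = 0 := this i
    show m i = 0
    exact_mod_cast h3
  -- the norm as an integer
  have hnormint : IsIntegral ℤ (Algebra.norm ℚ ξ) := Algebra.isIntegral_norm ℚ hξint
  obtain ⟨z, hz⟩ := IsIntegrallyClosed.isIntegral_iff.mp hnormint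
  have hnorm0 : Algebra.norm ℚ ξ ≠ 0 := Algebra.norm_ne_zero_iff.mpr hξ0
  have hz0 : z ≠ 0 := by
    rintro rfl
    rw [map_zero] at hz
    exact hnorm0 hz.symm
  refine ⟨z, hz0, ?_⟩
  -- the embeddings
  have hrootC : ∀ j : Fin d, Polynomial.aeval ((r j : ℂ)) fQ = 0 := by
    intro j
    have h0 : (frolovR d).eval (r j) = 0 := hr j
    have h1 : Polynomial.aeval ((r j : ℂ)) fQ
        = Polynomial.eval₂ (Int.castRingHom ℂ) ((r j : ℂ)) (frolovP d) := by
      rw [Polynomial.aeval_def, hfQdef, Polynomial.eval₂_map]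
      have hc2 : (algebraMap ℚ ℂ).comp (Int.castRingHom ℚ) = Int.castRingHom ℂ :=
        RingHom.ext_int _ _
      rw [hc2]
    have hcomp : (Complex.ofRealHom.comp (Int.castRingHom ℝ)) = Int.castRingHom ℂ :=
      RingHom.ext_int _ _
    have h2 : Polynomial.eval₂ (Int.castRingHom ℂ) ((r j : ℂ)) (frolovP d)
        = Complex.ofRealHom ((frolovR d).eval (r j)) := by
      rw [frolovR, Polynomial.eval_map, Polynomial.hom_eval₂, hcomp]
      rfl
    rw [h1, h2, h0, map_zero]
  set σ : Fin d → (K →ₐ[ℚ] ℂ) := fun j => AdjoinRoot.liftAlgHom fQ (Algebra.ofId ℚ ℂ) ((r j : ℂ)) (hrootC j) with hσdef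
  have hσroot : ∀ j, σ j θ = (r j : ℂ) := fun j => by
    show AdjoinRoot.liftAlgHom fQ (Algebra.ofId ℚ ℂ) ((r j : ℂ)) (hrootC j) (AdjoinRoot.root fQ) = _
    exact AdjoinRoot.liftAlgHom_root _ _ _ (hrootC j)
  have hσinj : Function.Injective σ := by
    intro i j h
    apply hinj
    have h5 : σ i θ = σ j θ := by rw [h]
    rw [hσroot, hσroot] at h5
    exact_mod_cast h5
  have hσbij : Function.Bijective σ := by
    refine (Fintype.bijective_iff_injective_and_card σ).mpr ⟨hσinj, ?_⟩
    rw [AlgHom.card ℚ K ℂ, pb.finrank, hdim, Fintype.card_fin]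
  have hprod := Algebra.norm_eq_prod_embeddings ℚ ℂ ξ
  rw [← Fintype.prod_bijective σ hσbij _ _ (fun j => rfl)] at hprod
  have hσξ : ∀ j, σ j ξ = ∑ i : Fin d, (m i : ℂ) * ((r j : ℂ)) ^ (i : ℕ) := by
    intro j
    rw [hξdef, map_sum]
    refine Finset.sum_congr rfl fun i _ => ?_
    rw [map_mul, map_pow, hσroot]
    simp only [map_intCast, eq_intCast]
  rw [← hz] at hprod
  apply Complex.ofReal_injective
  have hL : ((z:ℝ) : ℂ) = algebraMap ℚ ℂ (algebraMap ℤ ℚ z) := by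
    simp only [eq_intCast, map_intCast, Complex.ofReal_intCast]
  rw [hL, hprod, Complex.ofReal_prod]
  refine Finset.prod_congr rfl fun j _ => ?_
  rw [hσξ j, Complex.ofReal_sum]
  refine Finset.sum_congr rfl fun i _ => ?_
  push_cast
  ring

lemma frolov_count {d : ℕ} (hd : 2 ≤ d) (A : Matrix (Fin d) (Fin d) ℝ)
    (hnorm : ∀ m : Fin d → ℤ, m ≠ 0 → 1 ≤ |∏ j, A.mulVec (fun i => (m i : ℝ)) j|)
    (a b : Fin d → ℝ) (hab : ∀ j, a j ≤ b j) :
    {m : Fin d → ℤ |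
      A.mulVec (fun i => (m i : ℝ)) ∈ Set.univ.pi fun j => Set.Ico (a j) (b j)}.Finite ∧
    (Nat.card {m : Fin d → ℤ |
      A.mulVec (fun i => (m i : ℝ)) ∈ Set.univ.pi fun j => Set.Ico (a j) (b j)} : ℝ)
      ≤ (∏ j, (b j - a j)) + 1 := by
  haveI : NeZero d := ⟨by omega⟩
  set S := {m : Fin d → ℤ |
      A.mulVec (fun i => (m i : ℝ)) ∈ Set.univ.pi fun j => Set.Ico (a j) (b j)} with hSdef
  by_cases hempty : ∃ j, b j ≤ a j
  · obtain ⟨j0, hj0⟩ := hempty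
    have hS : S = ∅ := by
      ext m
      simp only [hSdef, Set.mem_setOf_eq, Set.mem_pi, Set.mem_empty_iff_false, iff_false,
        Set.mem_univ, forall_true_left]
      intro hmem
      have h := hmem j0
      rw [Set.mem_Ico] at h
      linarith [h.1, h.2]
    rw [hS]
    refine ⟨Set.finite_empty, ?_⟩
    have h0 : Nat.card (∅ : Set (Fin d → ℤ)) = 0 := by simp
    rw [h0]
    have : (0:ℝ) ≤ ∏ j, (b j - a j) :=
      Finset.prod_nonneg fun j _ => sub_nonneg.mpr (hab j)
    push_cast
    linarith
  · push_neg at hempty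
    set V := ∏ j, (b j - a j) with hVdef
    have hV : 0 < V := Finset.prod_pos fun j _ => sub_pos.mpr (hempty j)
    set n := ⌈V⌉₊ with hndef
    have hn : 0 < n := Nat.ceil_pos.mpr hV
    have hnR : (0:ℝ) < n := by exact_mod_cast hn
    have hVn : V / n ≤ 1 := (div_le_one hnR).mpr (Nat.le_ceil V)
    set ℓ := (b 0 - a 0) / n with hℓdef
    have hℓ : 0 < ℓ := div_pos (sub_pos.mpr (hempty 0)) hnR
    set x : (Fin d → ℤ) → (Fin d → ℝ) := fun m => A.mulVec (fun i => (m i : ℝ)) with hxdef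
    set F : (Fin d → ℤ) → ℤ := fun m => ⌊(x m 0 - a 0) / ℓ⌋ with hFdef
    have hmemS : ∀ m ∈ S, ∀ j, a j ≤ x m j ∧ x m j < b j := by
      intro m hm j
      have := hm j (Set.mem_univ j)
      simpa [Set.mem_Ico] using this
    -- injectivity of F on S
    have hinj : Set.InjOn F S := by
      intro m hm m' hm' hF
      by_contra hne
      have hu : (fun i => ((m i - m' i : ℤ) : ℝ)) =
          (fun i => (m i : ℝ)) - (fun i => (m' i : ℝ)) := by
        funext i
        push_cast
        simp [Pi.sub_apply]
      have hmne : (fun i => m i - m' i) ≠ (0 : Fin d → ℤ) := by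
        intro h
        apply hne
        funext i
        have := congrFun h i
        simpa [sub_eq_zero] using this
      have h1 : 1 ≤ |∏ j, (x m j - x m' j)| := by
        have := hnorm (fun i => m i - m' i) hmne
        have heq : ∀ j, A.mulVec (fun i => ((m i - m' i : ℤ) : ℝ)) j = x m j - x m' j := by
          intro j
          rw [hu, Matrix.mulVec_sub]
          rfl
        calc (1:ℝ) ≤ |∏ j, A.mulVec (fun i => ((m i - m' i : ℤ) : ℝ)) j| := this
          _ = |∏ j, (x m j - x m' j)| := by rw [Finset.prod_congr rfl fun j _ => heq j]
      have h1' : 1 ≤ ∏ j, |x m j - x m' j| := by rwa [← Finset.abs_prod]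
      have hpos : ∀ j, 0 < |x m j - x m' j| := by
        intro j
        rcases (abs_nonneg (x m j - x m' j)).lt_or_eq with h | h
        · exact h
        · exfalso
          have hz : x m j - x m' j = 0 := abs_eq_zero.mp h.symm
          have : ∏ j, |x m j - x m' j| = 0 :=
            Finset.prod_eq_zero (Finset.mem_univ j) (by rw [hz, abs_zero])
          linarith
      set c : Fin d → ℝ := Function.update (fun j => b j - a j) 0 ℓ with hcdef
      have hlt : ∀ j, |x m j - x m' j| < c j := by
        intro j
        by_cases hj : j = 0
        · subst hj
          set u : ℝ := (x m 0 - a 0) / ℓ with hudef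
          set v : ℝ := (x m' 0 - a 0) / ℓ with hvdef
          have hue : u * ℓ = x m 0 - a 0 := by rw [hudef]; field_simp
          have hve : v * ℓ = x m' 0 - a 0 := by rw [hvdef]; field_simp
          have hfl : ⌊u⌋ = ⌊v⌋ := hF
          have hcast : ((⌊u⌋ : ℤ) : ℝ) = ((⌊v⌋ : ℤ) : ℝ) := by rw [hfl]
          have h2 : |x m 0 - x m' 0| < ℓ := by
            rw [abs_sub_lt_iff]
            constructor
            · nlinarith [Int.lt_floor_add_one u, Int.floor_le v, hℓ]
            · nlinarith [Int.lt_floor_add_one v, Int.floor_le u, hℓ]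
          simpa [hcdef, Function.update_self] using h2
        · have hm1 := hmemS m hm j
          have hm2 := hmemS m' hm' j
          have : |x m j - x m' j| < b j - a j := by
            rw [abs_sub_lt_iff]
            constructor <;> linarith [hm1.1, hm1.2, hm2.1, hm2.2]
          simpa [hcdef, Function.update_of_ne hj] using this
      have hprodlt : ∏ j, |x m j - x m' j| < ∏ j, c j :=
        Finset.prod_lt_prod_of_nonempty (fun j _ => hpos j) (fun j _ => hlt j)
          Finset.univ_nonempty
      have hcV : ∏ j, c j = V / n := by
        have h3 : ∏ j, c j = ℓ * ∏ j ∈ Finset.univ.erase (0 : Fin d), (b j - a j) := by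
          rw [hcdef, Finset.erase_eq]
          exact Finset.prod_update_of_mem (Finset.mem_univ (0 : Fin d)) _ _
        have h4 : V = (b 0 - a 0) * ∏ j ∈ Finset.univ.erase 0, (b j - a j) :=
          (Finset.mul_prod_erase Finset.univ _ (Finset.mem_univ 0)).symm
        rw [h3, h4, hℓdef]
        ring
      rw [hcV] at hprodlt
      linarith
    -- image of F lies in Ico 0 n
    have himg : F '' S ⊆ Set.Ico (0:ℤ) n := by
      rintro _ ⟨m, hm, rfl⟩
      have h0 := (hmemS m hm 0).1
      have h1 := (hmemS m hm 0).2
      constructor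
      · apply Int.floor_nonneg.mpr
        apply div_nonneg (by linarith) hℓ.le
      · apply Int.floor_lt.mpr
        rw [div_lt_iff₀ hℓ]
        calc x m 0 - a 0 < b 0 - a 0 := by linarith
          _ = n * ℓ := by
            rw [hℓdef]
            field_simp
    have hfin : S.Finite :=
      Set.Finite.of_finite_image ((Set.finite_Ico (0:ℤ) n).subset himg) hinj
    refine ⟨hfin, ?_⟩
    have hcard : Nat.card S ≤ n := by
      have h5 : Nat.card S = S.ncard := Nat.card_coe_set_eq S
      have h6 : S.ncard = (F '' S).ncard := (Set.ncard_image_of_injOn hinj).symm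
      have h7 : (F '' S).ncard ≤ (Set.Ico (0:ℤ) n).ncard :=
        Set.ncard_le_ncard himg (Set.finite_Ico _ _)
      have h8 : (Set.Ico (0:ℤ) n).ncard = n := by
        rw [← Finset.coe_Ico, Set.ncard_coe_finset, Int.card_Ico]
        simp
      omega
    have h9 : (n:ℝ) < V + 1 := Nat.ceil_lt_add_one hV.le
    calc (Nat.card S : ℝ) ≤ (n : ℝ) := by exact_mod_cast hcard
      _ ≤ V + 1 := h9.le

/-- (Frolov lattice) For every d >= 2 there exists an invertible real d x d matrix A such
that the lattice L = {A m : m in Z^d} satisfies: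
(1) for every m in Z^d, m /= 0, |prod_j (A m)_j| >= 1;
(2) every axis-parallel box P = prod_j [a_j, b_j) contains at most vol(P) + 1 points of L. -/
theorem statement9 :
    ∀ d : ℕ, 2 ≤ d → ∃ A : Matrix (Fin d) (Fin d) ℝ, IsUnit A.det ∧
      (∀ m : Fin d → ℤ, m ≠ 0 →
        1 ≤ |∏ j, A.mulVec (fun i => (m i : ℝ)) j|) ∧
      (∀ a b : Fin d → ℝ, (∀ j, a j ≤ b j) →
        {m : Fin d → ℤ |
          A.mulVec (fun i => (m i : ℝ)) ∈ Set.univ.pi fun j => Set.Ico (a j) (b j)}.Finite ∧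
        (Nat.card {m : Fin d → ℤ |
          A.mulVec (fun i => (m i : ℝ)) ∈ Set.univ.pi fun j => Set.Ico (a j) (b j)} : ℝ)
          ≤ (∏ j, (b j - a j)) + 1) := by
  intro d hd
  have hd1 : 1 ≤ d := by omega
  have hex : ∀ j : Fin d, ∃ x : ℝ,
      x ∈ Set.Ioo (4*((j:ℕ):ℝ) - 2) (4*((j:ℕ):ℝ) + 2) ∧ (frolovR d).eval x = 0 :=
    fun j => frolov_exists_roots hd1 j j.isLt
  choose r hrmem hrroot using hex
  have hrmono : ∀ i j : Fin d, i < j → r i < r j := by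
    intro i j hij
    have h1 : r i < 4*((i:ℕ):ℝ) + 2 := (hrmem i).2
    have h2 : 4*((j:ℕ):ℝ) - 2 < r j := (hrmem j).1
    have h3 : (i:ℕ) + 1 ≤ (j:ℕ) := hij
    have h4 : ((i:ℕ):ℝ) + 1 ≤ ((j:ℕ):ℝ) := by exact_mod_cast h3
    linarith
  have hrinj : Function.Injective r := by
    intro i j h
    rcases lt_trichotomy i j with h' | h' | h'
    · exact absurd h (ne_of_lt (hrmono _ _ h'))
    · exact h'
    · exact absurd h.symm (ne_of_lt (hrmono _ _ h'))
  refine ⟨Matrix.vandermonde r, ?_, ?_, ?_⟩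
  · rw [Matrix.det_vandermonde]
    refine isUnit_iff_ne_zero.mpr (Finset.prod_ne_zero_iff.mpr fun i _ => ?_)
    refine Finset.prod_ne_zero_iff.mpr fun j hj => ?_
    have : i < j := Finset.mem_Ioi.mp hj
    exact sub_ne_zero.mpr (ne_of_gt (hrmono _ _ this))
  all_goals
    have hmul : ∀ m : Fin d → ℤ, ∀ j,
        (Matrix.vandermonde r).mulVec (fun i => (m i:ℝ)) j = ∑ i, (m i:ℝ) * r j ^ (i:ℕ) := by
      intro m j
      simp only [Matrix.mulVec, dotProduct, Matrix.vandermonde, Matrix.of_apply]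
      exact Finset.sum_congr rfl fun i _ => mul_comm _ _
    have hnorm : ∀ m : Fin d → ℤ, m ≠ 0 →
        1 ≤ |∏ j, (Matrix.vandermonde r).mulVec (fun i => (m i:ℝ)) j| := by
      intro m hm
      obtain ⟨z, hz0, hz⟩ := frolov_norm_int hd1 r hrroot hrinj m hm
      have heq : ∏ j, (Matrix.vandermonde r).mulVec (fun i => (m i:ℝ)) j = (z:ℝ) := by
        rw [hz]
        exact Finset.prod_congr rfl fun j _ => hmul m j
      rw [heq]
      have h5 : 1 ≤ |z| := Int.one_le_abs hz0
      calc (1:ℝ) = ((1:ℤ):ℝ) := by norm_num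
        _ ≤ ((|z|:ℤ):ℝ) := by exact_mod_cast h5
        _ = |(z:ℝ)| := by rw [Int.cast_abs]
  · exact hnorm
  · exact fun a b hab => frolov_count hd (Matrix.vandermonde r) hnorm a b hab
end

section
/- There exists an absolute constant C > 0 such that for every n ∈ ℕ the Fibonacci point set 𝓕_n satisfies disp(𝓕_n) ≤ C/b_n. -/
/-- The dispersion of a set T ⊆ [0,1)^d: the supremum of volumes of axis-parallel boxes
prod_j [x_j, y_j) ⊆ [0,1)^d containing no point of T. -/
noncomputable def disp (d : ℕ) (T : Set (Fin d → ℝ)) : ℝ :=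
  sSup {V : ℝ | ∃ x y : Fin d → ℝ,
    (∀ j, 0 ≤ x j ∧ x j ≤ y j ∧ y j ≤ 1) ∧
    (∀ t ∈ T, ∃ j, t j < x j ∨ y j ≤ t j) ∧
    V = ∏ j, (y j - x j)}

/-- The Fibonacci numbers with b_0 = b_1 = 1, b_n = b_{n-1} + b_{n-2}. -/
def fibb (n : ℕ) : ℕ := Nat.fib (n + 1)

/-- The Fibonacci point set F_n = {(mu/b_n, {mu b_{n-1}/b_n}) : mu = 1,...,b_n} ⊆ [0,1)^2. -/
noncomputable def FibSet (n : ℕ) : Set (Fin 2 → ℝ) :=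
  {p | ∃ μ : ℕ, 1 ≤ μ ∧ μ ≤ fibb n ∧
    p = ![(μ : ℝ) / (fibb n : ℝ),
          Int.fract ((μ : ℝ) * (fibb (n - 1) : ℝ) / (fibb n : ℝ))]}



/-- d'Ocagne-type identity: F_{m+1} F_n = F_m F_{n+1} + (-1)^m F_{n-m} for m ≤ n. -/
lemma fibid : ∀ m : ℕ, ∀ n : ℕ, m ≤ n →
    (Nat.fib (m+1) : ℤ) * Nat.fib n = Nat.fib m * Nat.fib (n+1) + (-1)^m * Nat.fib (n - m) := by
  intro m
  induction m with
  | zero => intro n _; simp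
  | succ m ih =>
    intro n hn
    obtain ⟨k, rfl⟩ : ∃ k, n = k + 1 := ⟨n - 1, by omega⟩
    have hmk : m ≤ k := by omega
    have h1 := ih k hmk
    have e1 : Nat.fib (m + 2) = Nat.fib m + Nat.fib (m+1) := Nat.fib_add_two
    have e2 : Nat.fib (k + 2) = Nat.fib k + Nat.fib (k+1) := Nat.fib_add_two
    have e3 : k + 1 - (m + 1) = k - m := by omega
    rw [show m + 1 + 1 = m + 2 from rfl, show k + 1 + 1 = k + 2 from rfl, e1, e2, e3]
    push_cast
    ring_nf
    ring_nf at h1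
    nlinarith [h1]

/-- Key lemma: residues μ·F_n mod F_{n+1}, μ < F_{j+3}, hit every window of length F_{n+1-j}. -/
lemma lemA (n : ℕ) : ∀ j : ℕ, j ≤ n → ∀ r : ℤ, ∃ μ : ℕ, μ < Nat.fib (j+3) ∧
    ((μ * Nat.fib n : ℕ) - r) % (Nat.fib (n+1) : ℤ) < Nat.fib (n+1-j) := by
  have hNpos : (0:ℤ) < (Nat.fib (n+1) : ℤ) := by
    exact_mod_cast Nat.fib_pos.mpr (Nat.succ_pos n)
  have hNne : (Nat.fib (n+1) : ℤ) ≠ 0 := ne_of_gt hNpos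
  intro j
  induction j with
  | zero =>
    intro _ r
    refine ⟨0, by norm_num [Nat.fib], ?_⟩
    simpa using Int.emod_lt_of_pos ((0 : ℤ) - r) hNpos
  | succ j ih =>
    intro hj r
    obtain ⟨μ1, hμ1, hlt⟩ := ih (by omega) r
    have he0 : (0:ℤ) ≤ ((μ1 * Nat.fib n : ℕ) - r) % (Nat.fib (n+1) : ℤ) :=
      Int.emod_nonneg _ hNne
    set e : ℤ := ((μ1 * Nat.fib n : ℕ) - r) % (Nat.fib (n+1) : ℤ) with he
    set d' : ℕ := n - j - 1 with hd'
    have hi1 : n + 1 - j = d' + 2 := by omega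
    have hi2 : n + 1 - (j + 1) = d' + 1 := by omega
    have hi3 : n - (j + 1) = d' := by omega
    have hi4 : n - j = d' + 1 := by omega
    rw [hi1] at hlt
    rw [hi2]
    have heN : e < (Nat.fib (n+1) : ℤ) := by
      have : (Nat.fib (d'+2) : ℤ) ≤ (Nat.fib (n+1) : ℤ) := by
        exact_mod_cast Nat.fib_mono (show d' + 2 ≤ n + 1 by omega)
      linarith
    by_cases hsmall : e < Nat.fib (d' + 1)
    · exact ⟨μ1, lt_of_lt_of_le hμ1 (Nat.fib_mono (by omega)), by rw [← he]; exact hsmall⟩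
    push_neg at hsmall
    have hfd : (Nat.fib (d'+2) : ℤ) = Nat.fib d' + Nat.fib (d'+1) := by
      exact_mod_cast congrArg (Nat.cast (R := ℤ)) (Nat.fib_add_two (n := d'))
    have hmono1 : (Nat.fib d' : ℤ) ≤ Nat.fib (d'+1) := by
      exact_mod_cast Nat.fib_mono (show d' ≤ d' + 1 by omega)
    have hXe : (((μ1 * Nat.fib n : ℕ) : ℤ) - r) ≡ e [ZMOD (Nat.fib (n+1) : ℤ)] := by
      unfold Int.ModEq
      rw [he, Int.emod_emod_of_dvd _ dvd_rfl]
    rcases Nat.even_or_odd j with hpar | hpar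
    · -- j even : step fib (j+2), moves by -fib d'
      refine ⟨μ1 + Nat.fib (j+2), ?_, ?_⟩
      · show μ1 + Nat.fib (j+2) < Nat.fib (j+4)
        have : Nat.fib (j+4) = Nat.fib (j+2) + Nat.fib (j+3) := Nat.fib_add_two
        omega
      · have hid := fibid (j+1) n (by omega)
        have hsgn : ((-1:ℤ))^(j+1) = -1 := hpar.add_one.neg_one_pow
        rw [hsgn, hi3] at hid
        have key : (((μ1 + Nat.fib (j+2)) * Nat.fib n : ℕ) : ℤ) - r
            = ((μ1 * Nat.fib n : ℕ) : ℤ) - r - Nat.fib d'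
              + Nat.fib (j+1) * (Nat.fib (n+1) : ℤ) := by
          push_cast
          push_cast at hid
          linarith [hid]
        rw [key, Int.add_mul_emod_self_right]
        have hsub := (hXe.sub_right (Nat.fib d' : ℤ)).eq
        rw [hsub]
        have hfin : (e - Nat.fib d') % (Nat.fib (n+1) : ℤ) = e - Nat.fib d' :=
          Int.emod_eq_of_lt (by linarith) (by linarith)
        rw [hfin]
        linarith
    · -- j odd : step fib (j+1), moves by -fib (d'+1)
      refine ⟨μ1 + Nat.fib (j+1), ?_, ?_⟩
      · show μ1 + Nat.fib (j+1) < Nat.fib (j+4)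
        have h1 : Nat.fib (j+4) = Nat.fib (j+2) + Nat.fib (j+3) := Nat.fib_add_two
        have h2 : Nat.fib (j+1) ≤ Nat.fib (j+2) := Nat.fib_mono (by omega)
        omega
      · have hid := fibid j n (by omega)
        have hsgn : ((-1:ℤ))^j = -1 := hpar.neg_one_pow
        rw [hsgn, hi4] at hid
        have key : (((μ1 + Nat.fib (j+1)) * Nat.fib n : ℕ) : ℤ) - r
            = ((μ1 * Nat.fib n : ℕ) : ℤ) - r - Nat.fib (d'+1)
              + Nat.fib j * (Nat.fib (n+1) : ℤ) := by
          push_cast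
          push_cast at hid
          linarith [hid]
        rw [key, Int.add_mul_emod_self_right]
        have hsub := (hXe.sub_right (Nat.fib (d'+1) : ℤ)).eq
        rw [hsub]
        have hfin : (e - Nat.fib (d'+1)) % (Nat.fib (n+1) : ℤ) = e - Nat.fib (d'+1) :=
          Int.emod_eq_of_lt (by linarith) (by linarith)
        rw [hfin]
        linarith

lemma fract_div_nat (K N : ℕ) (hN : 0 < N) :
    Int.fract ((K : ℝ) / (N : ℝ)) = ((K % N : ℕ) : ℝ) / (N : ℝ) := by
  have hNR : (0:ℝ) < (N:ℝ) := by exact_mod_cast hN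
  have hK : (K:ℝ) = (N:ℝ) * ((K/N : ℕ):ℝ) + ((K % N : ℕ):ℝ) := by
    exact_mod_cast (Nat.div_add_mod K N).symm
  rw [hK, add_div, mul_div_cancel_left₀ _ hNR.ne', Int.fract_natCast_add]
  exact Int.fract_eq_self.mpr ⟨by positivity, by
    rw [div_lt_one hNR]
    exact_mod_cast Nat.mod_lt K hN⟩


lemma hit (n j : ℕ) (hn : 1 ≤ n) (hjn : j ≤ n) (x y : Fin 2 → ℝ)
    (hxy : ∀ i, 0 ≤ x i ∧ x i ≤ y i ∧ y i ≤ 1)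
    (h1 : (Nat.fib (j+3) : ℝ) ≤ (Nat.fib (n+1) : ℝ) * (y 0 - x 0) - 2)
    (h2 : (Nat.fib (n+1-j) : ℝ) ≤ (Nat.fib (n+1) : ℝ) * (y 1 - x 1)) :
    ∃ t ∈ FibSet n, ∀ i, x i ≤ t i ∧ t i < y i := by
  set N : ℕ := Nat.fib (n+1) with hNdef
  set a : ℕ := Nat.fib n with hadef
  have hNpos : 0 < N := Nat.fib_pos.mpr (Nat.succ_pos n)
  have hNR : (0:ℝ) < (N:ℝ) := by exact_mod_cast hNpos
  have hx0 : 0 ≤ x 0 := (hxy 0).1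
  have hx1 : 0 ≤ x 1 := (hxy 1).1
  have hy1 : y 1 ≤ 1 := (hxy 1).2.2
  set m0 : ℕ := max 1 ⌈(N:ℝ) * x 0⌉₊ with hm0def
  obtain ⟨μ, hμlt, hE⟩ := lemA n j hjn ((⌈(N:ℝ) * x 1⌉ : ℤ) - (m0 * a : ℕ))
  set E : ℤ := ((μ * a : ℕ) - ((⌈(N:ℝ) * x 1⌉ : ℤ) - (m0 * a : ℕ))) % (N : ℤ) with hEdef
  have hE0 : 0 ≤ E := Int.emod_nonneg _ (by exact_mod_cast hNpos.ne')
  set M : ℕ := m0 + μ with hMdef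
  -- bounds on m0
  have hm0ge1 : 1 ≤ m0 := le_max_left _ _
  have hm0lb : (N:ℝ) * x 0 ≤ (m0 : ℝ) := by
    have := Nat.le_ceil ((N:ℝ) * x 0)
    have h2 : (⌈(N:ℝ) * x 0⌉₊ : ℝ) ≤ (m0 : ℝ) := by exact_mod_cast le_max_right _ _
    linarith
  have hm0ub : (m0 : ℝ) ≤ (N:ℝ) * x 0 + 1 := by
    rcases max_cases 1 ⌈(N:ℝ) * x 0⌉₊ with ⟨hc, hc2⟩ | ⟨hc, hc2⟩
    · rw [hm0def, hc]; push_cast; nlinarith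
    · rw [hm0def, hc]
      have := Nat.ceil_lt_add_one (by positivity : (0:ℝ) ≤ (N:ℝ) * x 0)
      linarith
  -- first coordinate bounds
  have hMub : (M : ℝ) < (N:ℝ) * y 0 := by
    have hμR : (μ : ℝ) ≤ (Nat.fib (j+3) : ℝ) - 1 := by
      have : μ + 1 ≤ Nat.fib (j+3) := hμlt
      have := (by exact_mod_cast this : (μ:ℝ) + 1 ≤ (Nat.fib (j+3) : ℝ))
      linarith
    have : (M : ℝ) = (m0 : ℝ) + μ := by rw [hMdef]; push_cast; ring
    rw [this]
    linarith
  have hMlb : (N:ℝ) * x 0 ≤ (M : ℝ) := by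
    have : (m0 : ℝ) ≤ M := by exact_mod_cast Nat.le_add_right m0 μ
    linarith
  have hMleN : M ≤ N := by
    have : (M:ℝ) < (N:ℝ) := by
      have : (N:ℝ) * y 0 ≤ (N:ℝ) := by nlinarith [(hxy 0).2.2]
      linarith
    exact le_of_lt (by exact_mod_cast this)
  -- second coordinate: value v = ⌈N x1⌉ + E
  set v : ℤ := ⌈(N:ℝ) * x 1⌉ + E with hvdef
  have hceil0 : (0:ℤ) ≤ ⌈(N:ℝ) * x 1⌉ := Int.ceil_nonneg (by positivity)
  have hv0 : 0 ≤ v := by rw [hvdef]; linarith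
  have hvltR : (v : ℝ) < (N:ℝ) * y 1 := by
    have hEub : (E : ℝ) ≤ (Nat.fib (n+1-j) : ℝ) - 1 := by
      have : E + 1 ≤ (Nat.fib (n+1-j) : ℤ) := hE
      have := (by exact_mod_cast this : (E:ℝ) + 1 ≤ (Nat.fib (n+1-j) : ℝ))
      linarith
    have hcl : (⌈(N:ℝ) * x 1⌉ : ℝ) < (N:ℝ) * x 1 + 1 := Int.ceil_lt_add_one _
    rw [hvdef]
    push_cast
    linarith
  have hvlb : (N:ℝ) * x 1 ≤ (v : ℝ) := by
    have := Int.le_ceil ((N:ℝ) * x 1)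
    have hE0R : (0:ℝ) ≤ (E:ℝ) := by exact_mod_cast hE0
    rw [hvdef]; push_cast
    linarith
  have hvltN : v < (N : ℤ) := by
    have : (v:ℝ) < (N:ℝ) := by nlinarith
    exact_mod_cast this
  -- M*a ≡ v mod N, so (M*a) % N = v
  have hmod : ((M * a : ℕ) : ℤ) % (N : ℤ) = v := by
    have hkey : ((M * a : ℕ) : ℤ) = ((μ * a : ℕ) : ℤ) - ((⌈(N:ℝ) * x 1⌉ : ℤ) - (m0 * a : ℕ))
        + ⌈(N:ℝ) * x 1⌉ := by rw [hMdef]; push_cast; ring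
    rw [hkey]
    have h1 : (((μ * a : ℕ) : ℤ) - ((⌈(N:ℝ) * x 1⌉ : ℤ) - (m0 * a : ℕ)) + ⌈(N:ℝ) * x 1⌉)
        % (N:ℤ) = (E + ⌈(N:ℝ) * x 1⌉) % (N:ℤ) := by
      have hXe : (((μ * a : ℕ) : ℤ) - ((⌈(N:ℝ) * x 1⌉ : ℤ) - (m0 * a : ℕ)))
          ≡ E [ZMOD (N:ℤ)] := by
        unfold Int.ModEq
        rw [hEdef, Int.emod_emod_of_dvd _ dvd_rfl]
      exact (hXe.add_right _).eq
    rw [h1]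
    rw [show E + ⌈(N:ℝ) * x 1⌉ = v by rw [hvdef]; ring]
    exact Int.emod_eq_of_lt hv0 hvltN
  -- natural number version
  have hmodn : ((M * a) % N : ℕ) = v := by
    have : (((M * a) % N : ℕ) : ℤ) = v := by
      rw [← hmod]
      exact Int.natCast_mod (M*a) N
    exact_mod_cast this
  -- build the point
  refine ⟨![(M : ℝ) / (N : ℝ), Int.fract ((M : ℝ) * (a : ℝ) / (N : ℝ))], ?_, ?_⟩
  · refine ⟨M, hm0ge1.trans (Nat.le_add_right _ _), ?_, ?_⟩
    · show M ≤ fibb n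
      rw [show fibb n = N from rfl]
      exact hMleN
    · have e1 : fibb n = N := rfl
      have e2 : fibb (n-1) = a := by
        rw [show fibb (n-1) = Nat.fib (n-1+1) from rfl, show n-1+1 = n by omega]
    
      rw [e1, e2]
  · intro i
    fin_cases i
    · constructor
      · show x 0 ≤ (M:ℝ) / N
        rw [le_div_iff₀ hNR]
        linarith
      · show (M:ℝ) / N < y 0
        rw [div_lt_iff₀ hNR]
        linarith
    · have hfr : Int.fract ((M : ℝ) * (a : ℝ) / (N : ℝ)) = ((M * a % N : ℕ) : ℝ) / N := by
        rw [show (M:ℝ) * (a:ℝ) = ((M * a : ℕ) : ℝ) by push_cast; ring]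
        exact fract_div_nat (M*a) N hNpos
      constructor
      · show x 1 ≤ Int.fract ((M : ℝ) * (a : ℝ) / (N : ℝ))
        rw [hfr, le_div_iff₀ hNR]
        have hvr : ((M * a % N : ℕ) : ℝ) = (v:ℝ) := by rw [← hmodn]; norm_cast
        rw [hvr]
        linarith
      · show Int.fract ((M : ℝ) * (a : ℝ) / (N : ℝ)) < y 1
        rw [hfr, div_lt_iff₀ hNR]
        have hvr : ((M * a % N : ℕ) : ℝ) = (v:ℝ) := by rw [← hmodn]; norm_cast
        rw [hvr]
        linarith

lemma fibge (j : ℕ) : j + 1 ≤ Nat.fib (j+3) := by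
  induction j with
  | zero => norm_num [Nat.fib]
  | succ j ih =>
    show j + 2 ≤ Nat.fib (j+4)
    have h1 : Nat.fib (j+4) = Nat.fib (j+2) + Nat.fib (j+3) := Nat.fib_add_two
    have h2 : 0 < Nat.fib (j+2) := Nat.fib_pos.mpr (by omega)
    omega

lemma fib5 (n : ℕ) : Nat.fib (n+4) ≤ 5 * Nat.fib (n+1) := by
  have h1 : Nat.fib (n+4) = Nat.fib (n+2) + Nat.fib (n+3) := Nat.fib_add_two
  have h2 : Nat.fib (n+3) = Nat.fib (n+1) + Nat.fib (n+2) := Nat.fib_add_two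
  have h3 : Nat.fib (n+2) = Nat.fib n + Nat.fib (n+1) := Nat.fib_add_two
  have h4 : Nat.fib n ≤ Nat.fib (n+1) := Nat.fib_le_fib_succ
  omega

lemma exists_fib_between (L : ℕ) (hL : 2 ≤ L) :
    ∃ j, Nat.fib (j+3) ≤ L ∧ L < Nat.fib (j+4) := by
  induction L with
  | zero => omega
  | succ L ih =>
    rcases Nat.lt_or_ge L 2 with hL2 | hL2
    · refine ⟨0, ?_, ?_⟩ <;> · norm_num [Nat.fib]; omega
    obtain ⟨j, h1, h2⟩ := ih hL2
    rcases Nat.lt_or_ge (L+1) (Nat.fib (j+4)) with h3 | h3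
    · exact ⟨j, by omega, h3⟩
    · refine ⟨j+1, by show Nat.fib (j+4) ≤ L + 1; omega, ?_⟩
      show L + 1 < Nat.fib (j+5)
      have h4 : Nat.fib (j+5) = Nat.fib (j+3) + Nat.fib (j+4) := Nat.fib_add_two
      have h5 : 2 ≤ Nat.fib (j+3) := by
        calc 2 = Nat.fib 3 := by norm_num [Nat.fib]
        _ ≤ Nat.fib (j+3) := Nat.fib_mono (by omega)
      omega

lemma main_est (n : ℕ) (hn : 1 ≤ n) (x y : Fin 2 → ℝ)
    (hxy : ∀ i, 0 ≤ x i ∧ x i ≤ y i ∧ y i ≤ 1)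
    (hav : ∀ t ∈ FibSet n, ∃ i, t i < x i ∨ y i ≤ t i) :
    (y 0 - x 0) * (y 1 - x 1) ≤ 100 / (Nat.fib (n+1) : ℝ) := by
  set N : ℕ := Nat.fib (n+1) with hNdef
  have hNpos : 0 < N := Nat.fib_pos.mpr (Nat.succ_pos n)
  have hNR : (0:ℝ) < (N:ℝ) := by exact_mod_cast hNpos
  have hw0 : 0 ≤ y 0 - x 0 := by linarith [(hxy 0).2.1]
  have hh0 : 0 ≤ y 1 - x 1 := by linarith [(hxy 1).2.1]
  have hw1 : y 0 - x 0 ≤ 1 := by linarith [(hxy 0).1, (hxy 0).2.2]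
  have hh1 : y 1 - x 1 ≤ 1 := by linarith [(hxy 1).1, (hxy 1).2.2]
  rw [le_div_iff₀ hNR]
  -- helper to derive contradictions from `hit`
  have noHit : ∀ j : ℕ, j ≤ n →
      (Nat.fib (j+3) : ℝ) ≤ (N : ℝ) * (y 0 - x 0) - 2 →
      (Nat.fib (n+1-j) : ℝ) ≤ (N : ℝ) * (y 1 - x 1) → False := by
    intro j hjn hh1' hh2'
    obtain ⟨t, htmem, ht⟩ := hit n j hn hjn x y hxy hh1' hh2'
    obtain ⟨i, hi⟩ := hav t htmem
    rcases hi with hi | hi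
    · exact absurd hi (not_lt.mpr (ht i).1)
    · exact absurd hi (not_le.mpr (ht i).2)
  by_cases hW : (N:ℝ) * (y 0 - x 0) < 5
  · nlinarith
  push_neg at hW
  set W : ℝ := (N:ℝ) * (y 0 - x 0) with hWdef
  have hW0 : 0 ≤ W := by positivity
  have hfloor5 : 5 ≤ ⌊W⌋₊ := Nat.le_floor (by exact_mod_cast hW)
  set L : ℕ := ⌊W⌋₊ - 2 with hLdef
  have hL3 : 3 ≤ L := by omega
  obtain ⟨j, hPj, hmax⟩ := exists_fib_between L (by omega)
  have hLW : (L:ℝ) ≤ W - 2 := by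
    have h1 : (⌊W⌋₊:ℝ) ≤ W := Nat.floor_le hW0
    have h2 : (L:ℝ) = (⌊W⌋₊:ℝ) - 2 := by
      rw [hLdef]; push_cast [Nat.cast_sub (by omega : 2 ≤ ⌊W⌋₊)]; ring
    linarith
  have hfibjW : (Nat.fib (j+3):ℝ) ≤ W - 2 := by
    have : (Nat.fib (j+3):ℝ) ≤ (L:ℝ) := by exact_mod_cast hPj
    linarith
  by_cases hjn : n ≤ j
  · -- window of length 1 is hit: so N * h < 1
    have hfn : (Nat.fib (n+3):ℝ) ≤ W - 2 := by
      have h1 : Nat.fib (n+3) ≤ Nat.fib (j+3) := Nat.fib_mono (by omega)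
      have : (Nat.fib (n+3):ℝ) ≤ (Nat.fib (j+3):ℝ) := by exact_mod_cast h1
      linarith
    by_cases hH : (1:ℝ) ≤ (N:ℝ) * (y 1 - x 1)
    · exact absurd (noHit n le_rfl hfn (by simpa [Nat.fib] using hH)) (by simp)
    · push_neg at hH
      nlinarith
  · push_neg at hjn
    have hWub : W < (Nat.fib (j+4):ℝ) + 3 := by
      have h1 : W < (⌊W⌋₊:ℝ) + 1 := Nat.lt_floor_add_one W
      have h2 : ⌊W⌋₊ = L + 2 := by omega
      have h4 : (L:ℝ) + 1 ≤ (Nat.fib (j+4):ℝ) := by exact_mod_cast hmax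
      rw [h2] at h1
      push_cast at h1
      linarith
    by_cases hH : (Nat.fib (n+1-j):ℝ) ≤ (N:ℝ) * (y 1 - x 1)
    · exact absurd (noHit j (by omega) hfibjW hH) (by simp)
    · push_neg at hH
      -- product bound
      have hprod : Nat.fib (j+4) * Nat.fib (n+1-j) ≤ Nat.fib (n+4) := by
        have hadd := Nat.fib_add (j+3) (n-j)
        have e1 : j + 3 + (n - j) + 1 = n + 4 := by omega
        have e2 : n - j + 1 = n + 1 - j := by omega
        rw [e1, e2] at hadd
        have : j + 3 + 1 = j + 4 := by omega
        rw [this] at hadd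
        omega
      have hfib5 := fib5 n
      have hprodR : (Nat.fib (j+4):ℝ) * (Nat.fib (n+1-j):ℝ) ≤ 5 * (N:ℝ) := by
        have : Nat.fib (j+4) * Nat.fib (n+1-j) ≤ 5 * N := le_trans hprod hfib5
        exact_mod_cast this
      have hF2nn : (0:ℝ) ≤ (Nat.fib (n+1-j):ℝ) := by positivity
      have hF2N : (Nat.fib (n+1-j):ℝ) ≤ (N:ℝ) := by
        exact_mod_cast Nat.fib_mono (by omega : n + 1 - j ≤ n + 1)
      have hkey : W * ((N:ℝ) * (y 1 - x 1)) ≤ 8 * (N:ℝ) := by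
        have hhnn : 0 ≤ (N:ℝ) * (y 1 - x 1) := by positivity
        nlinarith
      have hN1 : (1:ℝ) ≤ (N:ℝ) := by
        exact_mod_cast hNpos
      nlinarith

/-- There is an absolute constant C > 0 such that for every n the Fibonacci point set
satisfies disp(F_n) <= C / b_n. -/
theorem statement12 :
    ∃ C : ℝ, 0 < C ∧ ∀ n : ℕ, disp 2 (FibSet n) ≤ C / (fibb n : ℝ) := by
  refine ⟨100, by norm_num, fun n => ?_⟩
  have hNpos : 0 < fibb n := Nat.fib_pos.mpr (Nat.succ_pos n)
  have hNR : (0:ℝ) < (fibb n : ℝ) := by exact_mod_cast hNpos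
  apply Real.sSup_le _ (by positivity)
  rintro V ⟨x, y, hxy, hav, rfl⟩
  rw [Fin.prod_univ_two]
  rcases Nat.eq_zero_or_pos n with rfl | hn
  · have h1 : fibb 0 = 1 := rfl
    rw [h1]
    have h2 : y 0 - x 0 ≤ 1 := by linarith [(hxy 0).1, (hxy 0).2.2]
    have h3 : y 1 - x 1 ≤ 1 := by linarith [(hxy 1).1, (hxy 1).2.2]
    have h4 : 0 ≤ y 0 - x 0 := by linarith [(hxy 0).2.1]
    have h5 : 0 ≤ y 1 - x 1 := by linarith [(hxy 1).2.1]
    push_cast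
    nlinarith
  · have := main_est n hn x y hxy hav
    rwa [show fibb n = Nat.fib (n+1) from rfl]
end

section
/- Let d ≥ 2 and let A be an invertible real d×d matrix such that |∏_{j=1}^d (A·m)_j| ≥ 1 for every m ∈ ℤ^d with m ≠ 0, and such that every axis-parallel box P ⊂ ℝ^d contains at most vol(P) + 1 points of the lattice {A·m : m ∈ ℤ^d}. Then there exists a constant C(A,d) > 0 such that for every a > 1 the Frolov point set satisfies disp(𝓕(a,A)) ≤ C(A,d)·a^{−d}. -/
open Matrix MeasureTheory
open scoped ENNReal

/-- recursive covering constant -/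
noncomputable def Kc : ℕ → ℝ
  | 0 => 0
  | n + 1 => 2 * Kc n + 3 * (n + 1)

lemma Kc_nonneg (n : ℕ) : 0 ≤ Kc n := by
  induction n with
  | zero => simp [Kc]
  | succ n ih => simp only [Kc]; positivity

lemma Kc_pos (n : ℕ) (hn : 0 < n) : 0 < Kc n := by
  obtain ⟨m, rfl⟩ := Nat.exists_eq_succ_of_ne_zero hn.ne'
  have := Kc_nonneg m
  simp only [Kc]
  positivity

/-- the basis of ℝ^d given by the columns of an invertible matrix -/
noncomputable def colBasis {d : ℕ} (M : Matrix (Fin d) (Fin d) ℝ) (hM : IsUnit M.det) :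
    Module.Basis (Fin d) ℝ (Fin d → ℝ) :=
  (Pi.basisFun ℝ (Fin d)).map (M.toLinearEquiv' (M.invertibleOfIsUnitDet hM))

lemma colBasis_apply {d : ℕ} (M : Matrix (Fin d) (Fin d) ℝ) (hM : IsUnit M.det) (k : Fin d) :
    colBasis M hM k = fun i => M i k := by
  ext i
  simp [colBasis, Matrix.toLinearEquiv', Matrix.mulVec_single]

/-- Minkowski: a cube of volume exceeding the determinant contains a nonzero lattice point. -/
lemma minkowski_cube {d : ℕ} (hd : 0 < d) (M : Matrix (Fin d) (Fin d) ℝ) (hM : IsUnit M.det)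
    (ρ : ℝ) (hρ : 0 < ρ) (hdet : |M.det| < ρ ^ d) :
    ∃ m : Fin d → ℤ, m ≠ 0 ∧ ∀ i, |M.mulVec (fun k => (m k : ℝ)) i| ≤ ρ := by
  classical
  set b := colBasis M hM with hb
  set L : AddSubgroup (Fin d → ℝ) := (Submodule.span ℤ (Set.range b)).toAddSubgroup with hL
  have fund : IsAddFundamentalDomain L (ZSpan.fundamentalDomain b) volume :=
    ZSpan.isAddFundamentalDomain' b volume
  set s : Set (Fin d → ℝ) := Set.univ.pi fun _ => Set.Icc (-ρ) ρ with hs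
  have h_symm : ∀ x ∈ s, -x ∈ s := by
    intro x hx i _
    have := hx i (Set.mem_univ i)
    simp only [Set.mem_Icc, Pi.neg_apply] at this ⊢
    constructor
    · linarith [this.2]
    · linarith [this.1]
  have h_conv : Convex ℝ s := convex_pi fun i _ => convex_Icc _ _
  have hvolF : volume (ZSpan.fundamentalDomain b) = ENNReal.ofReal |M.det| := by
    rw [ZSpan.volume_fundamentalDomain]
    congr 1
    have : (Matrix.of ⇑b) = M.transpose := by
      ext i j
      have := colBasis_apply M hM i
      simp only [Matrix.of_apply, Matrix.transpose_apply, hb]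
      rw [this]
    rw [this, Matrix.det_transpose]
  have hvols : volume s = ENNReal.ofReal ((2 * ρ) ^ d) := by
    rw [hs, volume_pi_pi]
    simp only [Real.volume_Icc]
    rw [Finset.prod_const, Finset.card_univ, Fintype.card_fin]
    rw [← ENNReal.ofReal_pow (by linarith)]
    congr 1
    ring
  have hlt : volume (ZSpan.fundamentalDomain b) * 2 ^ Module.finrank ℝ (Fin d → ℝ) < volume s := by
    rw [hvolF, hvols]
    have hfr : Module.finrank ℝ (Fin d → ℝ) = d := by
      simp [Module.finrank_pi]
    rw [hfr]
    have h2 : (2 : ℝ≥0∞) ^ d = ENNReal.ofReal (2 ^ d) := by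
      rw [ENNReal.ofReal_pow (by norm_num)]
      norm_num
    rw [h2, ← ENNReal.ofReal_mul (abs_nonneg _)]
    apply ENNReal.ofReal_lt_ofReal_iff_of_nonneg (by positivity) |>.mpr
    calc |M.det| * 2 ^ d < ρ ^ d * 2 ^ d := by
          apply mul_lt_mul_of_pos_right hdet (by positivity)
      _ = (2 * ρ) ^ d := by rw [mul_pow]; ring
  haveI : Countable L := inferInstanceAs (Countable (Submodule.span ℤ (Set.range ⇑b)))
  obtain ⟨x, hx0, hxs⟩ :=
    exists_ne_zero_mem_lattice_of_measure_mul_two_pow_lt_measure fund h_symm h_conv hlt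
  have hxmem : (x : Fin d → ℝ) ∈ Submodule.span ℤ (Set.range b) := x.2
  rw [Submodule.mem_span_range_iff_exists_fun ℤ] at hxmem
  obtain ⟨c, hc⟩ := hxmem
  refine ⟨c, ?_, ?_⟩
  · rintro rfl
    apply hx0
    have : (x : Fin d → ℝ) = 0 := by rw [← hc]; simp
    exact Subtype.ext this
  · intro i
    have hxi : M.mulVec (fun k => (c k : ℝ)) i = (x : Fin d → ℝ) i := by
      rw [← hc]
      simp only [Matrix.mulVec, dotProduct, Finset.sum_apply]
      apply Finset.sum_congr rfl
      intro k _
      rw [colBasis_apply M hM k]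
      simp [mul_comm]
    rw [hxi]
    have := hxs i (Set.mem_univ i)
    rw [Set.mem_Icc] at this
    exact abs_le.mpr this



/-- Primitivize an integer vector by dividing by the gcd of its coordinates. -/
lemma exists_primitive {d : ℕ} (m : Fin d → ℤ) (hm : m ≠ 0) :
    ∃ (g : ℤ) (m₀ : Fin d → ℤ), g ≠ 0 ∧ (∀ i, m i = g * m₀ i) ∧ m₀ ≠ 0 ∧
      (∀ (z : ℤ) (w : Fin d → ℤ), (∀ i, m₀ i = z * w i) → IsUnit z) := by
  classical
  set g := Finset.univ.gcd m with hg
  have hg0 : g ≠ 0 := by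
    rw [hg]
    intro h
    rw [Finset.gcd_eq_zero_iff] at h
    apply hm
    funext i
    exact h i (Finset.mem_univ i)
  have hdvd : ∀ i, g ∣ m i := fun i => Finset.gcd_dvd (Finset.mem_univ i)
  refine ⟨g, fun i => m i / g, hg0, fun i => (Int.mul_ediv_cancel' (hdvd i)).symm, ?_, ?_⟩
  · intro h
    apply hm
    funext i
    have := congrFun h i
    simp only [Pi.zero_apply] at this ⊢
    have := Int.mul_ediv_cancel' (hdvd i)
    rw [‹m i / g = 0›] at this
    simpa using this.symm
  · intro z w hw
    have hgz : ∀ i, g * z ∣ m i := by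
      intro i
      have hwi : m i / g = z * w i := hw i
      have : m i = g * z * w i := by
        rw [← (Int.mul_ediv_cancel' (hdvd i)), hwi]; ring
      exact Dvd.intro _ this.symm
    have : g * z ∣ g := Finset.dvd_gcd (fun i _ => hgz i)
    have hz1 : z ∣ 1 := by
      rcases this with ⟨t, ht⟩
      refine ⟨t, ?_⟩
      have : g * 1 = g * (z * t) := by rw [mul_one, ← mul_assoc, ← ht]
      exact mul_left_cancel₀ hg0 this
    exact isUnit_of_dvd_one hz1

/-- A primitive integer vector can be extended to a basis of ℤ^d (placed at index 0). -/
lemma exists_basis_of_primitive {d : ℕ} (hd : 0 < d) (m₀ : Fin d → ℤ) (hm : m₀ ≠ 0)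
    (hprim : ∀ (z : ℤ) (w : Fin d → ℤ), (∀ i, m₀ i = z * w i) → IsUnit z) :
    ∃ b : Module.Basis (Fin d) ℤ (Fin d → ℤ), b ⟨0, hd⟩ = m₀ := by
  classical
  set N : Submodule ℤ (Fin d → ℤ) := Submodule.span ℤ {m₀} with hN
  obtain ⟨n, snf⟩ := N.smithNormalForm (Pi.basisFun ℤ (Fin d))
  -- N is isomorphic to ℤ, so n = 1
  have hinj : Function.Injective (LinearMap.toSpanSingleton ℤ (Fin d → ℤ) m₀) := by
    rw [← LinearMap.ker_eq_bot]
    exact LinearMap.ker_toSpanSingleton ℤ hm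
  have hrange : LinearMap.range (LinearMap.toSpanSingleton ℤ (Fin d → ℤ) m₀) = N := by
    rw [hN, LinearMap.span_singleton_eq_range]
  have e : ℤ ≃ₗ[ℤ] N := by
    refine (LinearEquiv.ofInjective _ hinj).trans (LinearEquiv.ofEq _ _ hrange)
  have hn : n = 1 := by
    have h1 : Module.finrank ℤ N = n := (Module.finrank_eq_card_basis snf.bN).trans (by simp)
    have h2 : Module.finrank ℤ N = 1 := by
      rw [← e.finrank_eq]
      simp
    omega
  subst hn
  -- write m₀ in terms of the basis of N
  have hmN : m₀ ∈ N := Submodule.mem_span_singleton_self m₀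
  set mN : N := ⟨m₀, hmN⟩ with hmN'
  have hrepr : mN = (snf.bN.repr mN 0) • snf.bN 0 := by
    conv_lhs => rw [← snf.bN.sum_repr mN]
    rw [Fin.sum_univ_one]
  have hbN_mem : (snf.bN 0 : Fin d → ℤ) ∈ Submodule.span ℤ {m₀} := (snf.bN 0).2
  rw [Submodule.mem_span_singleton] at hbN_mem
  obtain ⟨z, hz⟩ := hbN_mem
  set c := snf.bN.repr mN 0 with hc
  have hm₀ : m₀ = c • (snf.bN 0 : Fin d → ℤ) := by
    have := congrArg (Subtype.val) hrepr
    simpa using this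
  have hcz : c * z = 1 := by
    have h1 : m₀ = (c * z) • m₀ := by
      conv_lhs => rw [hm₀, ← hz, smul_smul]
    have h2 : ((c * z) - 1) • m₀ = 0 := by
      rw [sub_smul, one_smul, ← h1, sub_self]
    rcases smul_eq_zero.mp h2 with h | h
    · linarith [sub_eq_zero.mp (by exact_mod_cast h)]
    · exact absurd h hm
  have hsnf := snf.snf 0
  have hm₀' : m₀ = (c * snf.a 0) • snf.bM (snf.f 0) := by
    rw [hm₀, hsnf, smul_smul]
  have hu : IsUnit (c * snf.a 0) := by
    apply hprim (c * snf.a 0) (snf.bM (snf.f 0))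
    intro i
    have := congrFun hm₀' i
    simpa [Pi.smul_apply, smul_eq_mul] using this
  -- modify the basis so that it contains m₀
  set w : Fin d → ℤˣ := fun i => if i = snf.f 0 then hu.unit else 1 with hw
  set b1 := snf.bM.unitsSMul w with hb1
  have hwf : w (snf.f 0) = hu.unit := by simp [hw]
  have hb1f : b1 (snf.f 0) = m₀ := by
    rw [hb1, Module.Basis.unitsSMul_apply, hwf, hm₀', Units.smul_def, hu.unit_spec]
  refine ⟨b1.reindex (Equiv.swap (snf.f 0) ⟨0, hd⟩), ?_⟩
  rw [Module.Basis.reindex_apply, Equiv.symm_swap, Equiv.swap_apply_right]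
  exact hb1f


lemma vecMul_apply {d e : ℕ} (v : Fin d → ℝ) (M : Matrix (Fin d) (Fin e) ℝ) (k : Fin e) :
    Matrix.vecMul v M k = ∑ i, v i * M i k := by
  simp [Matrix.vecMul, dotProduct]

lemma mulVec_apply {d e : ℕ} (M : Matrix (Fin d) (Fin e) ℝ) (v : Fin e → ℝ) (i : Fin d) :
    M.mulVec v i = ∑ k, M i k * v k := by
  simp [Matrix.mulVec, dotProduct]

/-- sum of |·| is positive for a nonzero vector -/
lemma sum_abs_pos_of_ne_zero {d : ℕ} {v : Fin d → ℝ} (hv : v ≠ 0) : 0 < ∑ i, |v i| := by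
  have h1 : ∃ i, v i ≠ 0 := by
    by_contra h
    push_neg at h
    exact hv (funext fun i => h i)
  obtain ⟨i, hi⟩ := h1
  calc (0 : ℝ) < |v i| := abs_pos.mpr hi
    _ ≤ ∑ i, |v i| := Finset.single_le_sum (f := fun k => |v k|) (fun k _ => abs_nonneg _) (Finset.mem_univ i)

/-- The core transference theorem. -/
theorem core_transfer : ∀ (d : ℕ) (B : Matrix (Fin d) (Fin d) ℝ),
    (∀ u : Fin d → ℝ, u ≠ 0 → (∀ k, ∃ z : ℤ, Matrix.vecMul u B k = (z : ℝ)) → 1 ≤ ∑ i, |u i|) →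
    ∀ x : Fin d → ℝ, ∃ m : Fin d → ℤ,
      ∀ i, |B.mulVec (fun k => (m k : ℝ)) i - x i| ≤ Kc d := by
  intro d
  induction d with
  | zero => exact fun B _ x => ⟨0, fun i => i.elim0⟩
  | succ n ih =>
    intro B hdual x
    have hd : 0 < n + 1 := Nat.succ_pos n
    have hdpos : (0:ℝ) < (n:ℝ) + 1 := by positivity
    -- Step A : B is invertible
    have hdet : B.det ≠ 0 := by
      intro h0
      obtain ⟨v, hv0, hv⟩ := Matrix.exists_vecMul_eq_zero_iff.mpr h0
      set S := ∑ i, |v i| with hS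
      have hSpos : 0 < S := sum_abs_pos_of_ne_zero hv0
      set u : Fin (n+1) → ℝ := (2 * S)⁻¹ • v with hu
      have hu0 : u ≠ 0 := by
        simp only [hu, ne_eq, smul_eq_zero, inv_eq_zero, mul_eq_zero]
        push_neg
        exact ⟨⟨by norm_num, hSpos.ne'⟩, hv0⟩
      have h1 : (1:ℝ) ≤ ∑ i, |u i| := by
        apply hdual u hu0
        intro k
        refine ⟨0, ?_⟩
        have : Matrix.vecMul u B = (2*S)⁻¹ • Matrix.vecMul v B := by
          rw [hu, Matrix.smul_vecMul]
        rw [this, hv]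
        simp
      have h2 : ∑ i, |u i| = 2⁻¹ := by
        have : ∀ i, |u i| = (2*S)⁻¹ * |v i| := by
          intro i
          rw [hu]
          simp only [Pi.smul_apply, smul_eq_mul, abs_mul]
          congr 1
          rw [abs_of_pos (by positivity)]
        rw [Finset.sum_congr rfl (fun i _ => this i), ← Finset.mul_sum, ← hS]
        field_simp
      rw [h2] at h1
      norm_num at h1
    have hB : IsUnit B.det := isUnit_iff_ne_zero.mpr hdet
    -- Step B : determinant bound
    have hdetbd : |B.det| ≤ (2*((n:ℝ)+1))^(n+1) := by
      by_contra hgt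
      push_neg at hgt
      have hBt : IsUnit (B.transpose).det := by rwa [Matrix.det_transpose]
      set M := (B.transpose)⁻¹ with hM
      have hMu : IsUnit M.det := Matrix.isUnit_nonsing_inv_det _ hBt
      have hMdet : |M.det| < (1/(2*((n:ℝ)+1)))^(n+1) := by
        rw [hM, Matrix.det_nonsing_inv, Ring.inverse_eq_inv, abs_inv, Matrix.det_transpose]
        rw [div_pow, one_pow]
        rw [inv_lt_comm₀ (abs_pos.mpr hdet) (by positivity)]
        rw [inv_div, div_one]
        exact hgt
      obtain ⟨c, hc0, hcbd⟩ := minkowski_cube hd M hMu (1/(2*((n:ℝ)+1))) (by positivity) hMdet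
      set u := M.mulVec (fun k => (c k : ℝ)) with hu
      have hBtu : Matrix.vecMul u B = fun k => (c k : ℝ) := by
        rw [← Matrix.mulVec_transpose, hu, Matrix.mulVec_mulVec, Matrix.mul_nonsing_inv _ hBt]
        simp
      have hu0 : u ≠ 0 := by
        intro h
        apply hc0
        funext k
        have := congrFun hBtu k
        rw [h] at this
        simp only [Matrix.zero_vecMul, Pi.zero_apply] at this
        simp only [Pi.zero_apply]
        exact_mod_cast this.symm
      have h1 : (1:ℝ) ≤ ∑ i, |u i| := by
        apply hdual u hu0
        intro k
        exact ⟨c k, congrFun hBtu k⟩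
      have h2 : ∑ i, |u i| ≤ 2⁻¹ := by
        calc ∑ i, |u i| ≤ ∑ _i : Fin (n+1), (1/(2*((n:ℝ)+1))) :=
              Finset.sum_le_sum (fun i _ => hcbd i)
            _ = 2⁻¹ := by
              rw [Finset.sum_const, Finset.card_univ, Fintype.card_fin]
              push_cast
              field_simp
              have h2n : (2 + (n:ℝ)*2) ≠ 0 := by positivity
              ring_nf
              field_simp
              ring
      linarith
    -- Step C : short lattice vector
    have hdet3 : |B.det| < (3*((n:ℝ)+1))^(n+1) := by
      apply lt_of_le_of_lt hdetbd
      apply pow_lt_pow_left₀ _ (by positivity) (by omega)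
      linarith
    obtain ⟨m₁, hm₁0, hm₁bd⟩ := minkowski_cube hd B hB (3*((n:ℝ)+1)) (by positivity) hdet3
    -- Step D : primitivize
    obtain ⟨g, m₀, hg0, hgm, hm₀0, hprim⟩ := exists_primitive m₁ hm₁0
    have hm₀bd : ∀ i, |B.mulVec (fun k => (m₀ k : ℝ)) i| ≤ 3*((n:ℝ)+1) := by
      intro i
      have hcast : (fun k => (m₁ k : ℝ)) = (g:ℝ) • (fun k => (m₀ k : ℝ)) := by
        funext k
        simp only [Pi.smul_apply, smul_eq_mul]
        exact_mod_cast hgm k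
      have h1 : B.mulVec (fun k => (m₁ k : ℝ)) i
          = (g:ℝ) * B.mulVec (fun k => (m₀ k : ℝ)) i := by
        rw [hcast, Matrix.mulVec_smul]
        simp
      have h2 := hm₁bd i
      rw [h1, abs_mul] at h2
      have hg1 : (1:ℝ) ≤ |(g:ℝ)| := by
        have : (1:ℤ) ≤ |g| := Int.one_le_abs hg0
        exact_mod_cast this
      nlinarith [abs_nonneg (B.mulVec (fun k => (m₀ k : ℝ)) i)]
    -- Step E : unimodular change of basis
    obtain ⟨b, hb0⟩ := exists_basis_of_primitive hd m₀ hm₀0 hprim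
    set U : Matrix (Fin (n+1)) (Fin (n+1)) ℤ := Matrix.of (fun i k => b k i) with hU
    set Ur : Matrix (Fin (n+1)) (Fin (n+1)) ℝ := U.map (Int.cast : ℤ → ℝ) with hUr
    have hUtoMatrix : (Pi.basisFun ℤ (Fin (n+1))).toMatrix ⇑b = U := by
      ext i k
      simp [Module.Basis.toMatrix_apply, Pi.basisFun_repr, hU]
    haveI invU : Invertible U := by
      rw [← hUtoMatrix]
      exact (Pi.basisFun ℤ (Fin (n+1))).invertibleToMatrix b
    set V : Matrix (Fin (n+1)) (Fin (n+1)) ℤ := ⅟U with hV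
    have hUV : U * V = 1 := mul_invOf_self U
    have hcastmul : ∀ q : Fin (n+1) → ℤ,
        (fun i => ((U.mulVec q) i : ℝ)) = Ur.mulVec (fun k => (q k : ℝ)) := by
      intro q
      funext i
      simp only [Matrix.mulVec, dotProduct, hUr, Matrix.map_apply]
      push_cast
      rfl
    set M : Matrix (Fin (n+1)) (Fin (n+1)) ℝ := B * Ur with hMdef
    set v : Fin (n+1) → ℝ := B.mulVec (fun k => (m₀ k : ℝ)) with hv
    have hMcol : ∀ i, M i 0 = v i := by
      intro i
      rw [hMdef, Matrix.mul_apply, hv]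
      rw [_root_.mulVec_apply]
      apply Finset.sum_congr rfl
      intro k _
      congr 1
      simp only [hUr, Matrix.map_apply, hU, Matrix.of_apply]
      exact_mod_cast congrFun hb0 k
    -- dual property for M
    have hdualM : ∀ u : Fin (n+1) → ℝ, u ≠ 0 →
        (∀ k, ∃ z : ℤ, Matrix.vecMul u M k = (z : ℝ)) → 1 ≤ ∑ i, |u i| := by
      intro u hu0 hint
      apply hdual u hu0
      choose z hz using hint
      have hw : Matrix.vecMul (Matrix.vecMul u B) Ur = fun k => (z k : ℝ) := by
        funext k
        rw [Matrix.vecMul_vecMul, ← hMdef]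
        exact hz k
      have hUVr : Ur * (V.map (Int.cast : ℤ → ℝ)) = 1 := by
        have h1 : (U * V).map (Int.cast : ℤ → ℝ)
            = U.map (Int.cast : ℤ → ℝ) * V.map (Int.cast : ℤ → ℝ) :=
          Matrix.map_mul (f := Int.castRingHom ℝ)
        rw [hUr, ← h1, hUV]
        exact Matrix.map_one _ (by norm_num) (by norm_num)
      have hwz : Matrix.vecMul u B
          = Matrix.vecMul (fun k => (z k : ℝ)) (V.map (Int.cast : ℤ → ℝ)) := by
        rw [← hw, Matrix.vecMul_vecMul, hUVr, Matrix.vecMul_one]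
      intro k
      refine ⟨∑ i, z i * V i k, ?_⟩
      rw [hwz, _root_.vecMul_apply]
      push_cast
      apply Finset.sum_congr rfl
      intro i _
      simp [Matrix.map_apply]
    -- Step F : index of maximal coordinate of v
    have hv0 : v ≠ 0 := by
      intro h
      apply hm₀0
      have h2 : (fun k => ((m₀ k : ℤ) : ℝ)) = 0 := by
        have h3 := congrArg (fun w => (B⁻¹).mulVec w) h
        simp only [Matrix.mulVec_zero] at h3
        rw [hv, Matrix.mulVec_mulVec, Matrix.nonsing_inv_mul _ hB] at h3
        simpa using h3
      funext k
      have := congrFun h2 k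
      simp only [Pi.zero_apply] at this ⊢
      exact_mod_cast this
    obtain ⟨j, -, hj⟩ := Finset.exists_max_image Finset.univ (fun i => |v i|)
      ⟨0, Finset.mem_univ 0⟩
    have hjmax : ∀ i, |v i| ≤ |v j| := fun i => hj i (Finset.mem_univ i)
    have hvj : v j ≠ 0 := by
      intro h
      apply hv0
      funext i
      have h2 := hjmax i
      rw [h, abs_zero] at h2
      exact abs_eq_zero.mp (le_antisymm h2 (abs_nonneg _))
    have hvjbd : |v j| ≤ 3*((n:ℝ)+1) := hm₀bd j
    -- Step G : reduced (n × n) system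
    set B' : Matrix (Fin n) (Fin n) ℝ :=
      Matrix.of (fun r c => M (j.succAbove r) (c.succ)
        - (M j (c.succ) / v j) * v (j.succAbove r)) with hB'
    set x' : Fin n → ℝ := fun r => x (j.succAbove r) - (x j / v j) * v (j.succAbove r) with hx'
    set B2 : Matrix (Fin n) (Fin n) ℝ := Matrix.of (fun r c => 2⁻¹ * B' r c) with hB2
    have hdual2 : ∀ u' : Fin n → ℝ, u' ≠ 0 →
        (∀ k, ∃ z : ℤ, Matrix.vecMul u' B2 k = (z : ℝ)) → 1 ≤ ∑ r, |u' r| := by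
      intro u' hu'0 hint
      set ub : Fin n → ℝ := fun r => 2⁻¹ * u' r with hub
      have hint' : ∀ c, ∃ z : ℤ, Matrix.vecMul ub B' c = (z : ℝ) := by
        intro c
        obtain ⟨z, hz⟩ := hint c
        refine ⟨z, ?_⟩
        rw [← hz, _root_.vecMul_apply, _root_.vecMul_apply]
        apply Finset.sum_congr rfl
        intro r _
        simp only [hub, hB2, Matrix.of_apply]
        ring
      set uj : ℝ := -(∑ r, v (j.succAbove r) * ub r) / v j with huj
      set ut : Fin (n+1) → ℝ := j.insertNth uj ub with hut
      have hut_j : ut j = uj := by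
        rw [hut]
        exact Fin.insertNth_apply_same (α := fun _ => ℝ) j uj ub
      have hut_r : ∀ r, ut (j.succAbove r) = ub r := by
        intro r
        rw [hut]
        exact Fin.insertNth_apply_succAbove (α := fun _ => ℝ) j uj ub r
      have hut0 : ut ≠ 0 := by
        intro h
        apply hu'0
        funext r
        have h2 := congrFun h (j.succAbove r)
        rw [hut_r r] at h2
        simp only [Pi.zero_apply] at h2 ⊢
        have : (2:ℝ)⁻¹ * u' r = 0 := h2
        linarith [this]
      have hintM : ∀ k, ∃ z : ℤ, Matrix.vecMul ut M k = (z : ℝ) := by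
        intro k
        induction k using Fin.cases with
        | zero =>
          refine ⟨0, ?_⟩
          rw [_root_.vecMul_apply]
          have e1 : ∀ i, ut i * M i 0 = ut i * v i := fun i => by rw [hMcol]
          rw [Finset.sum_congr rfl (fun i _ => e1 i)]
          rw [Fin.sum_univ_succAbove (fun i => ut i * v i) j]
          have e2 : ∑ r, ut (j.succAbove r) * v (j.succAbove r)
              = ∑ r, v (j.succAbove r) * ub r := by
            apply Finset.sum_congr rfl
            intro r _
            rw [hut_r r]; ring
          rw [e2, hut_j, huj]
          field_simp
          simp
        | succ c =>
          obtain ⟨z, hz⟩ := hint' c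
          refine ⟨z, ?_⟩
          have hRHS : Matrix.vecMul ub B' c
              = (∑ r, ub r * M (j.succAbove r) c.succ)
                - (M j c.succ / v j) * ∑ r, v (j.succAbove r) * ub r := by
            rw [_root_.vecMul_apply]
            have e1 : ∀ r : Fin n, ub r * B' r c
                = ub r * M (j.succAbove r) c.succ
                  - (M j c.succ / v j) * (v (j.succAbove r) * ub r) := by
              intro r
              simp only [hB', Matrix.of_apply]
              ring
            rw [Finset.sum_congr rfl (fun r _ => e1 r), Finset.sum_sub_distrib,
              ← Finset.mul_sum]
          rw [← hz, hRHS]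
          rw [_root_.vecMul_apply]
          rw [Fin.sum_univ_succAbove (fun i => ut i * M i c.succ) j]
          have e2 : ∑ r, ut (j.succAbove r) * M (j.succAbove r) c.succ
              = ∑ r, ub r * M (j.succAbove r) c.succ := by
            apply Finset.sum_congr rfl
            intro r _
            rw [hut_r r]
          rw [e2, hut_j, huj]
          field_simp
          ring
      have h1 := hdualM ut hut0 hintM
      have hsplit : ∑ i, |ut i| = |uj| + ∑ r, |ub r| := by
        rw [Fin.sum_univ_succAbove (fun i => |ut i|) j, hut_j]
        congr 1
        apply Finset.sum_congr rfl
        intro r _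
        rw [hut_r r]
      have hujbd : |uj| ≤ ∑ r, |ub r| := by
        rw [huj, abs_div]
        rw [div_le_iff₀ (abs_pos.mpr hvj)]
        calc |-(∑ r, v (j.succAbove r) * ub r)|
            = |∑ r, v (j.succAbove r) * ub r| := abs_neg _
          _ ≤ ∑ r, |v (j.succAbove r) * ub r| := Finset.abs_sum_le_sum_abs _ _
          _ ≤ ∑ r, |ub r| * |v j| := by
              apply Finset.sum_le_sum
              intro r _
              rw [abs_mul, mul_comm]
              exact mul_le_mul_of_nonneg_left (hjmax _) (abs_nonneg _)
          _ = (∑ r, |ub r|) * |v j| := by rw [Finset.sum_mul]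
      have hub_sum : ∑ r, |ub r| = 2⁻¹ * ∑ r, |u' r| := by
        rw [Finset.mul_sum]
        apply Finset.sum_congr rfl
        intro r _
        rw [hub]
        simp only []
        rw [abs_mul]
        congr 1
        rw [abs_of_pos]
        norm_num
      rw [hsplit] at h1
      have : (1:ℝ) ≤ 2 * (2⁻¹ * ∑ r, |u' r|) := by
        rw [← hub_sum]
        linarith
      linarith
    -- apply the induction hypothesis
    obtain ⟨m', hm'⟩ := ih B2 hdual2 (fun r => 2⁻¹ * x' r)
    have hB'm : ∀ r, |B'.mulVec (fun k => (m' k : ℝ)) r - x' r| ≤ 2 * Kc n := by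
      intro r
      have h1 := hm' r
      have heq : B2.mulVec (fun k => (m' k : ℝ)) r
          = 2⁻¹ * B'.mulVec (fun k => (m' k : ℝ)) r := by
        rw [_root_.mulVec_apply, _root_.mulVec_apply, Finset.mul_sum]
        apply Finset.sum_congr rfl
        intro c _
        simp only [hB2, Matrix.of_apply]
        ring
      rw [heq] at h1
      have h2a : B'.mulVec (fun k => (m' k : ℝ)) r - x' r
          = 2 * (2⁻¹ * B'.mulVec (fun k => (m' k : ℝ)) r - 2⁻¹ * x' r) := by ring
      rw [h2a, abs_mul, abs_two]
      linarith
    -- Step H : assembly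
    set mc : Fin (n+1) → ℤ := Fin.cons 0 m' with hmc
    set p : Fin (n+1) → ℝ := M.mulVec (fun k => (mc k : ℝ)) with hp
    set t : ℝ := (x j - p j) / v j with ht
    set k0 : ℤ := round t with hk0
    set q : Fin (n+1) → ℤ := Fin.cons k0 m' with hq
    set y : Fin (n+1) → ℝ := M.mulVec (fun k => (q k : ℝ)) with hy
    have hyp : ∀ i, y i = p i + (k0 : ℝ) * v i := by
      intro i
      rw [hy, hp, _root_.mulVec_apply, _root_.mulVec_apply]
      rw [Fin.sum_univ_succ (fun k => M i k * ((q k : ℤ) : ℝ))]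
      rw [Fin.sum_univ_succ (fun k => M i k * ((mc k : ℤ) : ℝ))]
      simp only [hq, hmc, Fin.cons_zero, Fin.cons_succ, Int.cast_zero, mul_zero, zero_add]
      rw [hMcol i]
      ring
    have hpj : p j = ∑ c, M j (c.succ) * (m' c : ℝ) := by
      rw [hp, _root_.mulVec_apply]
      rw [Fin.sum_univ_succ (fun k => M j k * ((mc k : ℤ) : ℝ))]
      simp only [hmc, Fin.cons_zero, Fin.cons_succ, Int.cast_zero, mul_zero, zero_add]
    have hxpj : x j - p j = t * v j := by
      rw [ht]
      field_simp
    have hyj : |y j - x j| ≤ 3*((n:ℝ)+1)/2 := by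
      rw [hyp j]
      have e1 : p j + (k0:ℝ) * v j - x j = ((k0:ℝ) - t) * v j := by
        rw [sub_mul, ← hxpj]
        ring
      rw [e1, abs_mul]
      have h1 : |(k0:ℝ) - t| ≤ 1/2 := by
        rw [abs_sub_comm, hk0]
        exact abs_sub_round t
      calc |(k0:ℝ) - t| * |v j| ≤ (1/2) * (3*((n:ℝ)+1)) :=
            mul_le_mul h1 hvjbd (abs_nonneg _) (by norm_num)
        _ = 3*((n:ℝ)+1)/2 := by ring
    have hpsa : ∀ r, p (j.succAbove r)
        = B'.mulVec (fun k => (m' k : ℝ)) r + (p j / v j) * v (j.succAbove r) := by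
      intro r
      have hplhs : p (j.succAbove r) = ∑ c, M (j.succAbove r) (c.succ) * (m' c : ℝ) := by
        rw [hp, _root_.mulVec_apply]
        rw [Fin.sum_univ_succ (fun k => M (j.succAbove r) k * ((mc k : ℤ) : ℝ))]
        simp only [hmc, Fin.cons_zero, Fin.cons_succ, Int.cast_zero, mul_zero, zero_add]
      rw [hplhs, hpj, _root_.mulVec_apply]
      have e1 : ∑ c, B' r c * (m' c : ℝ)
          = (∑ c, M (j.succAbove r) c.succ * (m' c : ℝ))
            - (v (j.succAbove r) / v j) * ∑ c, M j c.succ * (m' c : ℝ) := by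
        rw [Finset.mul_sum, ← Finset.sum_sub_distrib]
        apply Finset.sum_congr rfl
        intro c _
        simp only [hB', Matrix.of_apply]
        ring
      rw [e1]
      field_simp
      ring
    refine ⟨U.mulVec q, ?_⟩
    have hBq : B.mulVec (fun k => ((U.mulVec q) k : ℝ)) = y := by
      rw [hcastmul q, Matrix.mulVec_mulVec, ← hMdef, ← hy]
    intro i
    rw [hBq]
    have hKd : Kc (n+1) = 2 * Kc n + 3 * ((n:ℝ)+1) := by
      show Kc (n+1) = _
      rw [Kc]
    by_cases hij : i = j
    · subst hij
      rw [hKd]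
      have := Kc_nonneg n
      have : 3*((n:ℝ)+1)/2 ≤ 2 * Kc n + 3 * ((n:ℝ)+1) := by
        have := Kc_nonneg n
        linarith
      linarith [hyj]
    · obtain ⟨r, hr⟩ := Fin.exists_succAbove_eq hij
      rw [← hr]
      have hyr : y (j.succAbove r) - x (j.succAbove r)
          = (B'.mulVec (fun k => (m' k : ℝ)) r - x' r)
            + ((y j - x j)/v j) * v (j.succAbove r) := by
        rw [hyp (j.succAbove r), hpsa r, hyp j]
        simp only [hx']
        field_simp
        ring
      rw [hyr]
      calc |(B'.mulVec (fun k => (m' k : ℝ)) r - x' r)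
            + ((y j - x j)/v j) * v (j.succAbove r)|
          ≤ |B'.mulVec (fun k => (m' k : ℝ)) r - x' r|
            + |((y j - x j)/v j) * v (j.succAbove r)| := abs_add_le _ _
        _ ≤ 2 * Kc n + 3*((n:ℝ)+1)/2 := by
            apply add_le_add (hB'm r)
            rw [abs_mul, abs_div]
            calc |y j - x j| / |v j| * |v (j.succAbove r)|
                ≤ |y j - x j| / |v j| * |v j| := by
                  apply mul_le_mul_of_nonneg_left (hjmax _) (by positivity)
              _ = |y j - x j| := div_mul_cancel₀ _ (abs_ne_zero.mpr hvj)
              _ ≤ 3*((n:ℝ)+1)/2 := hyj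
        _ ≤ Kc (n+1) := by
            rw [hKd]
            have := Kc_nonneg n
            linarith


/-- AM–GM in the form needed. -/
lemma am_gm_aux {d : ℕ} (hd : 0 < d) (w : Fin d → ℝ) (hw : ∀ i, 0 ≤ w i) (c : ℝ) (hc : 0 ≤ c)
    (h : c ^ d ≤ ∏ i, w i) : c * d ≤ ∑ i, w i := by
  have hd' : (0:ℝ) < d := by exact_mod_cast hd
  have h1 : ∏ i, (w i) ^ ((d:ℝ)⁻¹) ≤ ∑ i, (d:ℝ)⁻¹ * w i :=
    Real.geom_mean_le_arith_mean_weighted Finset.univ (fun _ => (d:ℝ)⁻¹) w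
      (fun i _ => by positivity)
      (by rw [Finset.sum_const, Finset.card_univ, Fintype.card_fin, nsmul_eq_mul]
          field_simp)
      (fun i _ => hw i)
  have h2 : ∏ i, (w i) ^ ((d:ℝ)⁻¹) = (∏ i, w i) ^ ((d:ℝ)⁻¹) :=
    Real.finset_prod_rpow Finset.univ w (fun i _ => hw i) _
  have h3 : c ≤ (∏ i, w i) ^ ((d:ℝ)⁻¹) := by
    have hceq : c = (c ^ d) ^ ((d:ℝ)⁻¹) := by
      rw [← Real.rpow_natCast c d, ← Real.rpow_mul hc]
      rw [mul_inv_cancel₀ (by positivity)]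
      exact (Real.rpow_one c).symm
    rw [hceq]
    exact Real.rpow_le_rpow (by positivity) h (by positivity)
  have h4 : c ≤ (d:ℝ)⁻¹ * ∑ i, w i := by
    rw [← Finset.mul_sum] at h1
    calc c ≤ (∏ i, w i) ^ ((d:ℝ)⁻¹) := h3
      _ = ∏ i, (w i) ^ ((d:ℝ)⁻¹) := h2.symm
      _ ≤ (d:ℝ)⁻¹ * ∑ i, w i := h1
  have := mul_le_mul_of_nonneg_right h4 (le_of_lt hd')
  calc c * d ≤ ((d:ℝ)⁻¹ * ∑ i, w i) * d := this
    _ = ∑ i, w i := by field_simp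



/-- The Frolov point set F(a,A) = {a^{-1} (A^{-1})^T m : m in Z^d} ∩ [0,1]^d. -/
noncomputable def FrolovSet (d : ℕ) (a : ℝ) (A : Matrix (Fin d) (Fin d) ℝ) :
    Set (Fin d → ℝ) :=
  {x | (∃ m : Fin d → ℤ, x = a⁻¹ • (A⁻¹).transpose.mulVec (fun i => (m i : ℝ))) ∧
    ∀ j, x j ∈ Set.Icc (0 : ℝ) 1}

/-- (Temlyakov) Let d >= 2 and let A be an invertible real d x d matrix such that
|prod_j (A m)_j| >= 1 for every nonzero m in Z^d, and every axis-parallel box P contains at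
most vol(P) + 1 lattice points. Then there is C(A,d) > 0 such that for every a > 1 the
Frolov point set satisfies disp(F(a,A)) <= C(A,d) a^{-d}. -/
theorem statement13 (d : ℕ) (hd : 2 ≤ d) (A : Matrix (Fin d) (Fin d) ℝ)
    (hA : IsUnit A.det)
    (h1 : ∀ m : Fin d → ℤ, m ≠ 0 → 1 ≤ |∏ j, A.mulVec (fun i => (m i : ℝ)) j|)
    (h2 : ∀ a b : Fin d → ℝ, (∀ j, a j ≤ b j) →
      {m : Fin d → ℤ |
        A.mulVec (fun i => (m i : ℝ)) ∈ Set.univ.pi fun j => Set.Ico (a j) (b j)}.Finite ∧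
      (Nat.card {m : Fin d → ℤ |
        A.mulVec (fun i => (m i : ℝ)) ∈ Set.univ.pi fun j => Set.Ico (a j) (b j)} : ℝ)
        ≤ (∏ j, (b j - a j)) + 1) :
    ∃ C : ℝ, 0 < C ∧ ∀ a : ℝ, 1 < a →
      disp d (FrolovSet d a A) ≤ C / a ^ d := by
  clear h2
  have hd0 : 0 < d := by omega
  have hdR : (0:ℝ) < d := by exact_mod_cast hd0
  set Kd : ℝ := Kc d with hKddef
  have hKd : 0 < Kd := Kc_pos d hd0
  refine ⟨(4 * Kd / d) ^ d, by positivity, ?_⟩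
  intro a ha
  have ha0 : (0:ℝ) < a := lt_trans one_pos ha
  unfold disp
  apply Real.sSup_le
  · rintro V ⟨xx, yy, hbox, hempty, hVdef⟩
    by_contra hgt
    push_neg at hgt
    set l : Fin d → ℝ := fun i => yy i - xx i with hl
    have hlnn : ∀ i, 0 ≤ l i := fun i => sub_nonneg.mpr (hbox i).2.1
    have hVpos : 0 < V :=
      lt_of_le_of_lt (by positivity : (0:ℝ) ≤ (4*Kd/(d:ℝ))^d / a^d) hgt
    have hlpos : ∀ i, 0 < l i := by
      intro i
      rcases lt_or_eq_of_le (hlnn i) with h | h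
      · exact h
      · exfalso
        rw [hVdef] at hVpos
        rw [Finset.prod_eq_zero (Finset.mem_univ i) (by rw [hl] at h; exact h.symm)] at hVpos
        exact lt_irrefl 0 hVpos
    set R : Matrix (Fin d) (Fin d) ℝ := a⁻¹ • (A⁻¹).transpose with hR
    set sc : Fin d → ℝ := fun i => 4 * Kd / l i with hsc
    have hscpos : ∀ i, 0 < sc i := fun i => by
      have := hlpos i
      rw [hsc]
      positivity
    set Bl : Matrix (Fin d) (Fin d) ℝ := Matrix.of (fun i k => sc i * R i k) with hBl
    have hdual : ∀ u : Fin d → ℝ, u ≠ 0 →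
        (∀ k, ∃ z : ℤ, Matrix.vecMul u Bl k = (z:ℝ)) → 1 ≤ ∑ i, |u i| := by
      intro u hu0 hint
      set u' : Fin d → ℝ := fun i => sc i * u i with hu'
      choose z hz using hint
      have h5 : Matrix.vecMul u' (A⁻¹).transpose = fun k => a * (z k : ℝ) := by
        funext k
        have h5a := hz k
        rw [_root_.vecMul_apply] at h5a
        have h5b : ∑ i, u i * Bl i k = a⁻¹ * ∑ i, u' i * (A⁻¹).transpose i k := by
          rw [Finset.mul_sum]
          apply Finset.sum_congr rfl
          intro i _
          simp only [hBl, Matrix.of_apply, hR, Matrix.smul_apply, smul_eq_mul, hu']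
          ring
        rw [h5b] at h5a
        rw [_root_.vecMul_apply]
        field_simp at h5a ⊢
        linarith [h5a]
      have h6 : (A⁻¹).mulVec u' = fun k => a * (z k:ℝ) := by
        rw [show A⁻¹ = ((A⁻¹).transpose).transpose from (Matrix.transpose_transpose _).symm,
          Matrix.mulVec_transpose]
        exact h5
      have h7 : u' = A.mulVec (fun k => a * (z k:ℝ)) := by
        rw [← h6, Matrix.mulVec_mulVec, Matrix.mul_nonsing_inv _ hA, Matrix.one_mulVec]
      have hz0 : z ≠ 0 := by
        intro hzz
        apply hu0
        funext i
        have h8 : u' i = 0 := by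
          rw [h7, _root_.mulVec_apply]
          apply Finset.sum_eq_zero
          intro k _
          rw [hzz]
          simp
        have := hscpos i
        rw [hu'] at h8
        simp only [Pi.zero_apply]
        rcases mul_eq_zero.mp h8 with h | h
        · exact absurd h (ne_of_gt this)
        · exact h
      have hAz := h1 z hz0
      set wv : Fin d → ℝ := fun i => l i * |A.mulVec (fun k => ((z k : ℤ):ℝ)) i| with hwv
      have hwvnn : ∀ i, 0 ≤ wv i := fun i => by
        rw [hwv]
        exact mul_nonneg (hlnn i) (abs_nonneg _)
      have hprod : (4 * Kd / ((d:ℝ) * a)) ^ d ≤ ∏ i, wv i := by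
        have e1 : ∏ i, wv i
            = (∏ i, l i) * ∏ i, |A.mulVec (fun k => ((z k : ℤ):ℝ)) i| := by
          rw [hwv, ← Finset.prod_mul_distrib]
        have e2 : (1:ℝ) ≤ ∏ i, |A.mulVec (fun k => ((z k : ℤ):ℝ)) i| := by
          rw [← Finset.abs_prod]
          exact hAz
        have e3 : (4 * Kd / ((d:ℝ) * a)) ^ d ≤ ∏ i, l i := by
          have e4 : (4 * Kd / ((d:ℝ) * a)) ^ d = (4*Kd/(d:ℝ))^d / a^d := by
            rw [div_pow, div_pow, mul_pow]
            field_simp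
            rw [mul_pow]
          rw [e4]
          have : V = ∏ i, l i := hVdef
          rw [← this]
          exact le_of_lt hgt
        calc (4 * Kd / ((d:ℝ) * a)) ^ d ≤ ∏ i, l i := e3
          _ = (∏ i, l i) * 1 := (mul_one _).symm
          _ ≤ (∏ i, l i) * ∏ i, |A.mulVec (fun k => ((z k : ℤ):ℝ)) i| := by
              apply mul_le_mul_of_nonneg_left e2
              exact Finset.prod_nonneg (fun i _ => hlnn i)
          _ = ∏ i, wv i := e1.symm
      have hsum := am_gm_aux hd0 wv hwvnn (4 * Kd / ((d:ℝ) * a)) (by positivity) hprod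
      have hui : ∀ i, |u i| = (a/(4*Kd)) * wv i := by
        intro i
        have e5 : u i = u' i / sc i := by
          rw [hu']
          exact (mul_div_cancel_left₀ (u i) (ne_of_gt (hscpos i))).symm
        have e6 : |u' i| = a * |A.mulVec (fun k => ((z k : ℤ):ℝ)) i| := by
          rw [h7]
          have : A.mulVec (fun k => a * (z k:ℝ)) i
              = a * A.mulVec (fun k => ((z k : ℤ):ℝ)) i := by
            rw [_root_.mulVec_apply, _root_.mulVec_apply, Finset.mul_sum]
            apply Finset.sum_congr rfl
            intro k _
            ring
          rw [this, abs_mul, abs_of_pos ha0]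
        rw [e5, abs_div, e6, abs_of_pos (hscpos i), hsc, hwv]
        have := hlpos i
        field_simp
      have hsum2 : ∑ i, |u i| = (a/(4*Kd)) * ∑ i, wv i := by
        rw [Finset.mul_sum]
        exact Finset.sum_congr rfl (fun i _ => hui i)
      rw [hsum2]
      have e7 : 4 * Kd / ((d:ℝ) * a) * d = 4 * Kd / a := by
        field_simp
      rw [e7] at hsum
      calc (1:ℝ) = (a/(4*Kd)) * (4*Kd/a) := by field_simp
        _ ≤ (a/(4*Kd)) * ∑ i, wv i := by
            apply mul_le_mul_of_nonneg_left hsum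
            positivity
    obtain ⟨m, hm⟩ := core_transfer d Bl hdual (fun i => sc i * ((xx i + yy i)/2))
    set pt : Fin d → ℝ := a⁻¹ • (A⁻¹).transpose.mulVec (fun i => (m i : ℝ)) with hpt
    have hptR : pt = R.mulVec (fun i => (m i:ℝ)) := by
      rw [hpt, hR, Matrix.smul_mulVec]
    have hcoord : ∀ i, xx i ≤ pt i ∧ pt i < yy i := by
      intro i
      have h8 := hm i
      have h9 : Bl.mulVec (fun k => (m k:ℝ)) i = sc i * pt i := by
        rw [_root_.mulVec_apply, hptR, _root_.mulVec_apply, Finset.mul_sum]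
        apply Finset.sum_congr rfl
        intro k _
        simp only [hBl, Matrix.of_apply]
        ring
      rw [h9] at h8
      have h10 : |pt i - (xx i + yy i)/2| ≤ l i / 4 := by
        have e8 : sc i * pt i - sc i * ((xx i + yy i)/2)
            = sc i * (pt i - (xx i + yy i)/2) := by ring
        rw [e8, abs_mul, abs_of_pos (hscpos i)] at h8
        have e9 : Kd = sc i * (l i / 4) := by
          rw [hsc]
          have := hlpos i
          field_simp
          try ring
        rw [← hKddef, e9] at h8
        exact le_of_mul_le_mul_left h8 (hscpos i)
      have hll : l i = yy i - xx i := rfl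
      rw [hll] at h10
      have h11 := abs_le.mp h10
      have hlyy : 0 < yy i - xx i := hlpos i
      constructor
      · linarith [h11.1]
      · linarith [h11.2]
    have hmem : pt ∈ FrolovSet d a A := by
      refine ⟨⟨m, rfl⟩, ?_⟩
      intro j
      constructor
      · exact le_trans (hbox j).1 (hcoord j).1
      · exact le_trans (le_of_lt (hcoord j).2) (hbox j).2.2
    obtain ⟨jj, hjj⟩ := hempty pt hmem
    rcases hjj with h | h
    · exact absurd (hcoord jj).1 (not_le.mpr h)
    · exact absurd h (not_le.mpr (hcoord jj).2)
  · positivity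
end
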